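/- arXiv:math/0012059 — 12 statements merged into one kernel-verified Lean document; each statement's English description precedes it below -/
import Mathlib

section
/- Let Q be an odd positive integer, P ∈ {1,...,Q−1} with gcd(P,Q) = 1, and q = exp(iπP/Q). Let V be a nonzero finite-dimensional complex inner product space and let X, Y, Z be self-adjoint linear endomorphisms of V with Z invertible, satisfying Z X = q⁻² X Z, Z Y = q² Y Z, and q⁻¹ X Y − q Y X = −(1 − Z²)/(q − q⁻¹). Suppose the representation is irreducible, i.e. the only subspaces W ⊆ V with X W ⊆ W, Y W ⊆ W and Z W ⊆ W are {0} and V. Then X = 0, Y = 0, Z = I or Z = −I, and dim V = 1. -/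
open Module End in
lemma aux_comm_zero {V : Type*} [NormedAddCommGroup V] [InnerProductSpace ℂ V]
    [FiniteDimensional ℂ V] (Z W : V →ₗ[ℂ] V) (hZsa : Z.IsSymmetric)
    (hZinj : Function.Injective Z) (c : ℂ) (hc : c.im ≠ 0)
    (hcomm : Z ∘ₗ W = c • (W ∘ₗ Z)) : W = 0 := by
  have htop : (⨆ μ, Module.End.eigenspace Z μ) = ⊤ :=
    Submodule.orthogonal_eq_bot_iff.mp hZsa.orthogonalComplement_iSup_eigenspaces_eq_bot
  have hker : ∀ μ : ℂ, Module.End.eigenspace Z μ ≤ LinearMap.ker W := by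
    intro μ v hv
    rw [Module.End.mem_eigenspace_iff] at hv
    by_cases hv0 : v = 0
    · simp [hv0]
    by_contra hWv
    rw [LinearMap.mem_ker] at hWv
    have hμ0 : μ ≠ 0 := by
      rintro rfl
      exact hv0 (hZinj (by simpa using hv))
    -- Z (W v) = (c*μ) • W v
    have hZWv : Z (W v) = (c * μ) • W v := by
      have := congrFun (congrArg DFunLike.coe hcomm) v
      simp only [LinearMap.comp_apply, LinearMap.smul_apply] at this
      rw [this, hv, map_smul, smul_smul]
    have hev1 : Module.End.HasEigenvalue Z μ :=
      Module.End.hasEigenvalue_of_hasEigenvector ⟨Module.End.mem_eigenspace_iff.mpr hv, hv0⟩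
    have hev2 : Module.End.HasEigenvalue Z (c * μ) :=
      Module.End.hasEigenvalue_of_hasEigenvector ⟨Module.End.mem_eigenspace_iff.mpr hZWv, hWv⟩
    have h1 : μ.im = 0 := Complex.conj_eq_iff_im.mp (hZsa.conj_eigenvalue_eq_self hev1)
    have h2 : (c * μ).im = 0 := Complex.conj_eq_iff_im.mp (hZsa.conj_eigenvalue_eq_self hev2)
    rw [Complex.mul_im, h1] at h2; simp only [mul_zero, zero_add] at h2
    have hμre : μ.re ≠ 0 := fun h => hμ0 (Complex.ext h h1)
    rcases mul_eq_zero.mp h2 with h | h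
    · exact hc h
    · exact hμre h
  have : (⊤ : Submodule ℂ V) ≤ LinearMap.ker W := htop ▸ iSup_le hker
  exact LinearMap.ker_eq_top.mp (top_le_iff.mp this)


/-- For `q = exp(iπP/Q)` a root of unity as above, any irreducible
`*`-representation of the algebra `U` on a nonzero finite-dimensional complex inner product
space (self-adjoint `X, Y, Z` with `Z` invertible satisfying the defining relations) is trivial:
`X = 0`, `Y = 0`, `Z = ±I` and `dim V = 1`. -/
theorem stmt_5 (Q P : ℕ) (hQodd : Odd Q) (hQpos : 0 < Q)
    (hP1 : 1 ≤ P) (hPQ : P ≤ Q - 1) (hcop : Nat.Coprime P Q)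
    (q : ℂ) (hq : q = Complex.exp (↑Real.pi * Complex.I * (P : ℂ) / (Q : ℂ)))
    {V : Type*} [NormedAddCommGroup V] [InnerProductSpace ℂ V]
    [FiniteDimensional ℂ V] [Nontrivial V]
    (X Y Z : V →ₗ[ℂ] V)
    (hXsa : LinearMap.IsSymmetric X) (hYsa : LinearMap.IsSymmetric Y)
    (hZsa : LinearMap.IsSymmetric Z)
    (hZinv : Function.Bijective Z)
    (hZX : Z ∘ₗ X = (q⁻¹ ^ 2) • (X ∘ₗ Z))
    (hZY : Z ∘ₗ Y = (q ^ 2) • (Y ∘ₗ Z))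
    (hXY : q⁻¹ • (X ∘ₗ Y) - q • (Y ∘ₗ X)
        = -((q - q⁻¹)⁻¹ • ((LinearMap.id : V →ₗ[ℂ] V) - Z ∘ₗ Z)))
    (hirr : ∀ W : Submodule ℂ V, (∀ v ∈ W, X v ∈ W) → (∀ v ∈ W, Y v ∈ W) →
      (∀ v ∈ W, Z v ∈ W) → W = ⊥ ∨ W = ⊤) :
    X = 0 ∧ Y = 0 ∧ (Z = (LinearMap.id : V →ₗ[ℂ] V) ∨ Z = -(LinearMap.id : V →ₗ[ℂ] V)) ∧
      Module.finrank ℂ V = 1 := by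
  have hQ0 : (Q : ℝ) ≠ 0 := Nat.cast_ne_zero.mpr hQpos.ne'
  have hQ0' : (Q : ℂ) ≠ 0 := Nat.cast_ne_zero.mpr hQpos.ne'
  have hπ : Real.pi ≠ 0 := Real.pi_ne_zero
  -- sin(2πP/Q) ≠ 0
  have hsin : Real.sin (2 * (Real.pi * P / Q)) ≠ 0 := by
    intro h
    rw [Real.sin_eq_zero_iff] at h
    obtain ⟨n, hn⟩ := h
    have key : (n : ℝ) * Q = 2 * P := by
      field_simp at hn
      nlinarith [Real.pi_pos]
    have keyz : n * (Q : ℤ) = 2 * P := by exact_mod_cast key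
    have hPz : 1 ≤ (P : ℤ) := by exact_mod_cast hP1
    have hPQz : (P : ℤ) ≤ (Q : ℤ) - 1 := by
      have : P ≤ Q - 1 := hPQ
      omega
    have hQz : 0 < (Q : ℤ) := by exact_mod_cast hQpos
    have hn0 : 0 < n := by nlinarith
    have hn2 : n < 2 := by nlinarith
    have hn1 : n = 1 := by omega
    obtain ⟨k, hk⟩ := hQodd
    have : (Q : ℤ) = 2 * k + 1 := by exact_mod_cast hk
    rw [hn1, one_mul] at keyz
    omega
  -- q^2 and q⁻¹^2 have nonzero imaginary part
  have hq2 : q ^ 2 = Complex.exp ((↑(2 * (Real.pi * P / Q)) : ℂ) * Complex.I) := by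
    rw [hq, ← Complex.exp_nat_mul]
    congr 1
    push_cast
    field_simp
  have him2 : (q ^ 2).im ≠ 0 := by
    rw [hq2, Complex.exp_ofReal_mul_I_im]
    exact hsin
  have hq0 : q ≠ 0 := by rw [hq]; exact Complex.exp_ne_zero _
  have hq20 : q ^ 2 ≠ 0 := pow_ne_zero 2 hq0
  have himinv : (q⁻¹ ^ 2).im ≠ 0 := by
    rw [inv_pow, Complex.inv_im]
    simp only [ne_eq, div_eq_zero_iff, neg_eq_zero]
    push_neg
    exact ⟨him2, (Complex.normSq_pos.mpr hq20).ne'⟩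
  -- X = 0, Y = 0
  have hX0 : X = 0 := aux_comm_zero Z X hZsa hZinv.injective _ himinv hZX
  have hY0 : Y = 0 := aux_comm_zero Z Y hZsa hZinv.injective _ him2 hZY
  -- q - q⁻¹ ≠ 0
  have hqq : q - q⁻¹ ≠ 0 := by
    intro h
    have h1 : q ^ 2 = 1 := by
      rw [sq]
      nth_rewrite 2 [sub_eq_zero.mp h]
      exact mul_inv_cancel₀ hq0
    exact him2 (by rw [h1]; simp)
  -- Z² = id
  have hZ2 : Z ∘ₗ Z = LinearMap.id := by
    have h := hXY
    rw [hX0, hY0] at h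
    simp only [LinearMap.comp_zero, LinearMap.zero_comp, smul_zero, sub_zero, zero_sub,
      neg_eq_iff_eq_neg, neg_neg] at h
    have h2 : (q - q⁻¹)⁻¹ • ((LinearMap.id : V →ₗ[ℂ] V) - Z ∘ₗ Z) = 0 := by
      rw [← neg_eq_zero]; exact h.symm
    rcases smul_eq_zero.mp h2 with hc | hc
    · exact absurd hc (inv_ne_zero hqq)
    · exact (sub_eq_zero.mp hc).symm
  -- Z = ± id
  have hZpm : Z = (LinearMap.id : V →ₗ[ℂ] V) ∨ Z = -(LinearMap.id : V →ₗ[ℂ] V) := by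
    rcases hirr (LinearMap.ker (Z - LinearMap.id))
      (fun v _ => by simp [hX0])
      (fun v _ => by simp [hY0])
      (fun v hv => by
        rw [LinearMap.mem_ker, LinearMap.sub_apply, LinearMap.id_apply, sub_eq_zero] at hv
        rw [hv]
        rw [LinearMap.mem_ker, LinearMap.sub_apply, LinearMap.id_apply, sub_eq_zero, hv]) with
      hbot | htop
    · right
      ext v
      have hzz : Z (Z v) = v := congrFun (congrArg DFunLike.coe hZ2) v
      have hker : Z v + v ∈ LinearMap.ker (Z - LinearMap.id) := by
        rw [LinearMap.mem_ker, LinearMap.sub_apply, LinearMap.id_apply, map_add, hzz]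
        abel
      rw [hbot, Submodule.mem_bot] at hker
      simpa using eq_neg_of_add_eq_zero_left hker
    · left
      ext v
      have hv : v ∈ LinearMap.ker (Z - LinearMap.id) := htop ▸ Submodule.mem_top
      rw [LinearMap.mem_ker, LinearMap.sub_apply, LinearMap.id_apply, sub_eq_zero] at hv
      simpa using hv
  refine ⟨hX0, hY0, hZpm, ?_⟩
  obtain ⟨v, hv0⟩ := exists_ne (0 : V)
  rcases hirr (Submodule.span ℂ {v})
    (fun w _ => by simp [hX0])
    (fun w _ => by simp [hY0])
    (fun w hw => by
      rcases hZpm with h | h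
      · rw [h]; simpa using hw
      · rw [h]; simpa using Submodule.neg_mem _ hw) with hb | ht
  · exact absurd (Submodule.span_singleton_eq_bot.mp hb) hv0
  · have h1 := finrank_span_singleton (K := ℂ) hv0
    rw [ht] at h1
    simpa [finrank_top] using h1
end

section
/- Let Q be an odd positive integer, P ∈ {1,...,Q−1} with gcd(P,Q) = 1, q = exp(iπP/Q), fix n ∈ {1,...,Q} and set d = Q+1−n. Define d×d complex matrices (indices 0,...,d−1): X̃ with only nonzero entries X̃_{j,j−1} = x_j = q^{−n−2j+1}[n+j−1]_q for j = 1,...,d−1; Ỹ with only nonzero entries Ỹ_{j−1,j} = y_j = [j]_q for j = 1,...,d−1; and Z̃ diagonal with Z̃_{jj} = z_j = q^{−n−2j} for j = 0,...,d−1. Then Z̃ X̃ = q⁻² X̃ Z̃, Z̃ Ỹ = q² Ỹ Z̃, and q⁻¹ X̃ Ỹ − q Ỹ X̃ = −(1 − Z̃²)/(q − q⁻¹). -/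
/-- The q-number `[x]_q = (q^x − q^(−x))/(q − q⁻¹)`. -/
noncomputable def qnum (q : ℂ) (x : ℤ) : ℂ := (q ^ x - q ^ (-x)) / (q - q⁻¹)

lemma qnum_zero (q : ℂ) : qnum q 0 = 0 := by simp [qnum]

lemma qnum_eq_zero_of_pow {q : ℂ} (h0 : q ≠ 0) {x : ℤ} (h : q ^ (2*x) = 1) : qnum q x = 0 := by
  have hx : q ^ x * q ^ x = 1 := by
    rw [← zpow_add₀ h0]; rw [two_mul] at h; exact h
  have : q ^ (-x) = q ^ x := by
    rw [zpow_neg]; exact inv_eq_of_mul_eq_one_left hx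
  simp [qnum, this]

set_option maxHeartbeats 1000000 in
lemma key (q : ℂ) (h0 : q ≠ 0) (a b : ℤ) :
    q⁻¹ * (q ^ (-a - 2*b + 1) * qnum q (a + b - 1) * qnum q b)
    - q * (qnum q (b+1) * (q ^ (-a - 2*(b+1) + 1) * qnum q (a + (b+1) - 1)))
    = -((q - q⁻¹)⁻¹ * (1 - q ^ (-a - 2*b) * q ^ (-a - 2*b))) := by
  rcases eq_or_ne (q - q⁻¹) 0 with h | h
  · simp [qnum, h]
  · unfold qnum
    have hA : q ^ a ≠ 0 := zpow_ne_zero _ h0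
    have hB : q ^ b ≠ 0 := zpow_ne_zero _ h0
    have e1 : q ^ (-a - 2*b + 1) = q / (q^a * q^b * q^b) := by
      rw [show -a - 2*b + 1 = 1 - a - b - b by ring, zpow_sub₀ h0, zpow_sub₀ h0,
        zpow_sub₀ h0, zpow_one]; ring
    have e2 : q ^ (a + b - 1) = q^a * q^b / q := by
      rw [zpow_sub₀ h0, zpow_add₀ h0, zpow_one]
    have e3 : q ^ (-(a + b - 1)) = q / (q^a * q^b) := by rw [zpow_neg, e2, inv_div]
    have e4 : q ^ (-b) = (q^b)⁻¹ := zpow_neg q b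
    have e5 : q ^ (-a - 2*(b+1) + 1) = 1 / (q * q^a * q^b * q^b) := by
      rw [show -a - 2*(b+1) + 1 = 0 - 1 - a - b - b by ring, zpow_sub₀ h0, zpow_sub₀ h0,
        zpow_sub₀ h0, zpow_sub₀ h0, zpow_one, zpow_zero]; ring
    have e6 : q ^ (a + (b+1) - 1) = q^a * q^b := by
      rw [show a + (b+1) - 1 = a + b by ring, zpow_add₀ h0]
    have e7 : q ^ (-(a + (b+1) - 1)) = (q^a * q^b)⁻¹ := by rw [zpow_neg, e6]
    have e8 : q ^ (b+1) = q^b * q := by rw [zpow_add₀ h0, zpow_one]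
    have e9 : q ^ (-(b+1)) = (q^b * q)⁻¹ := by rw [zpow_neg, e8]
    have e10 : q ^ (-a - 2*b) = 1 / (q^a * q^b * q^b) := by
      rw [show -a - 2*b = 0 - a - b - b by ring, zpow_sub₀ h0, zpow_sub₀ h0,
        zpow_sub₀ h0, zpow_zero]; ring
    have hq1 : q * q - 1 ≠ 0 := by
      intro hc
      apply h
      have hinv : q⁻¹ = q := inv_eq_of_mul_eq_one_left (by linear_combination hc)
      rw [hinv]; ring
    have hsub : q - q⁻¹ = (q * q - 1) / q := by field_simp
    rw [hsub, e1, e2, e3, e4, e5, e6, e7, e8, e9, e10]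
    field_simp [h0, hA, hB, hq1]
    have h1 : q ^ 2 * (q ^ a) ^ 2 * (q ^ b) ^ 4 - q ^ 4 * (q ^ a) ^ 2 * (q ^ b) ^ 4 * 2 +
        q ^ 6 * (q ^ a) ^ 2 * (q ^ b) ^ 4 ≠ 0 := by
      have : q ^ 2 * (q ^ a) ^ 2 * (q ^ b) ^ 4 - q ^ 4 * (q ^ a) ^ 2 * (q ^ b) ^ 4 * 2 +
          q ^ 6 * (q ^ a) ^ 2 * (q ^ b) ^ 4
          = (q ^ 2 * (q ^ a) ^ 2 * (q ^ b) ^ 4) * ((q * q - 1) * (q * q - 1)) := by ring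
      rw [this]
      exact mul_ne_zero (mul_ne_zero (mul_ne_zero (pow_ne_zero _ h0) (pow_ne_zero _ hA))
        (pow_ne_zero _ hB)) (mul_ne_zero hq1 hq1)
    have h2 : q ^ 2 * (q ^ a) ^ 2 * (q ^ b) ^ 4 - (q ^ a) ^ 2 * (q ^ b) ^ 4 ≠ 0 := by
      have : q ^ 2 * (q ^ a) ^ 2 * (q ^ b) ^ 4 - (q ^ a) ^ 2 * (q ^ b) ^ 4
          = ((q ^ a) ^ 2 * (q ^ b) ^ 4) * (q * q - 1) := by ring
      rw [this]
      exact mul_ne_zero (mul_ne_zero (pow_ne_zero _ hA) (pow_ne_zero _ hB)) hq1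
    have hD1 : q * (q ^ a * q ^ b * q ^ b * (q * (q ^ a * q ^ b) * (q * q - 1)) * (q ^ b * (q * q - 1))) ≠ 0 := by
      apply_rules [mul_ne_zero]
    have hD2 : q ^ b * q * (q * q - 1) * (q * q ^ a * q ^ b * q ^ b * (q ^ a * q ^ b * (q * q - 1))) ≠ 0 := by
      apply_rules [mul_ne_zero]
    have hE : (q * q - 1) * (q ^ a * q ^ b * q ^ b * (q ^ a * q ^ b * q ^ b)) ≠ 0 := by
      apply_rules [mul_ne_zero]
    have hq2 : q ^ 2 - 1 ≠ 0 := by rw [pow_two]; exact hq1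
    rw [neg_div', div_eq_div_iff (pow_ne_zero 2 hq2) hq2]
    ring

/-- For `q = exp(iπP/Q)`, `n ∈ {1,...,Q}`, `d = Q+1−n`, the `d×d` matrices
`X̃` (subdiagonal entries `x_j = q^(−n−2j+1)[n+j−1]_q`), `Ỹ` (superdiagonal entries
`y_j = [j]_q`) and `Z̃` (diagonal entries `z_j = q^(−n−2j)`) satisfy the defining relations
`Z̃ X̃ = q⁻² X̃ Z̃`, `Z̃ Ỹ = q² Ỹ Z̃`, `q⁻¹ X̃ Ỹ − q Ỹ X̃ = −(1 − Z̃²)/(q − q⁻¹)`. -/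
theorem stmt_6 (Q P : ℕ) (hQodd : Odd Q) (hQpos : 0 < Q)
    (hP1 : 1 ≤ P) (hPQ : P ≤ Q - 1) (hcop : Nat.Coprime P Q)
    (q : ℂ) (hq : q = Complex.exp (↑Real.pi * Complex.I * (P : ℂ) / (Q : ℂ)))
    (n : ℕ) (hn1 : 1 ≤ n) (hnQ : n ≤ Q) (d : ℕ) (hd : d = Q + 1 - n) :
    let Xm : Matrix (Fin d) (Fin d) ℂ := Matrix.of fun i j =>
      if (i : ℕ) = (j : ℕ) + 1 then
        q ^ (-(n : ℤ) - 2 * (i : ℤ) + 1) * qnum q ((n : ℤ) + (i : ℤ) - 1) else 0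
    let Ym : Matrix (Fin d) (Fin d) ℂ := Matrix.of fun i j =>
      if (j : ℕ) = (i : ℕ) + 1 then qnum q (j : ℤ) else 0
    let Zm : Matrix (Fin d) (Fin d) ℂ := Matrix.of fun i j =>
      if i = j then q ^ (-(n : ℤ) - 2 * (i : ℤ)) else 0
    Zm * Xm = (q⁻¹ ^ 2) • (Xm * Zm) ∧
    Zm * Ym = (q ^ 2) • (Ym * Zm) ∧
    q⁻¹ • (Xm * Ym) - q • (Ym * Xm) = -((q - q⁻¹)⁻¹ • ((1 : Matrix (Fin d) (Fin d) ℂ) - Zm ^ 2)) := by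
  intro Xm Ym Zm
  have h0 : q ≠ 0 := by rw [hq]; exact Complex.exp_ne_zero _
  have hQc : (Q : ℂ) ≠ 0 := Nat.cast_ne_zero.2 hQpos.ne'
  have hQ2 : q ^ (2 * (Q : ℤ)) = 1 := by
    have : q ^ (2 * Q) = Complex.exp ((2 * Q : ℕ) * (↑Real.pi * Complex.I * (P : ℂ) / (Q : ℂ))) := by
      rw [hq, ← Complex.exp_nat_mul]
    have harg : ((2 * Q : ℕ) : ℂ) * (↑Real.pi * Complex.I * (P : ℂ) / (Q : ℂ))
        = (P : ℤ) * (2 * ↑Real.pi * Complex.I) := by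
      push_cast
      field_simp
    rw [show (2 * (Q : ℤ)) = ((2 * Q : ℕ) : ℤ) by push_cast; ring, zpow_natCast, this, harg,
      Complex.exp_int_mul_two_pi_mul_I]
  have hqnumQ : qnum q (Q : ℤ) = 0 := qnum_eq_zero_of_pow h0 hQ2
  refine ⟨?_, ?_, ?_⟩
  · ext i j
    have h1 : (Zm * Xm) i j = q ^ (-(n : ℤ) - 2 * (i : ℤ)) * Xm i j := by
      rw [Matrix.mul_apply, Finset.sum_eq_single i]
      · simp [Zm]
      · intro b _ hb
        have : ¬ (i = b) := fun hc => hb hc.symm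
        simp [Zm, this]
      · intro hmem; exact absurd (Finset.mem_univ _) hmem
    have h2 : (Xm * Zm) i j = Xm i j * q ^ (-(n : ℤ) - 2 * (j : ℤ)) := by
      rw [Matrix.mul_apply, Finset.sum_eq_single j]
      · simp [Zm]
      · intro b _ hb
        simp [Zm, hb]
      · intro hmem; exact absurd (Finset.mem_univ _) hmem
    rw [Matrix.smul_apply, h1, h2, smul_eq_mul]
    by_cases hij : (i : ℕ) = (j : ℕ) + 1
    · have hz : q ^ (-(n : ℤ) - 2 * (i : ℤ)) = q ^ (-2 : ℤ) * q ^ (-(n : ℤ) - 2 * (j : ℤ)) := by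
        rw [← zpow_add₀ h0]; congr 1
        have : (i : ℤ) = (j : ℤ) + 1 := by exact_mod_cast hij
        omega
      have hinv : q⁻¹ ^ 2 = q ^ (-2 : ℤ) := by
        rw [← zpow_neg_one, ← zpow_natCast (q ^ (-1 : ℤ)), ← zpow_mul]; norm_num
      rw [hz, hinv]; ring
    · have : Xm i j = 0 := by simp [Xm, hij]
      rw [this]; ring
  · ext i j
    have h1 : (Zm * Ym) i j = q ^ (-(n : ℤ) - 2 * (i : ℤ)) * Ym i j := by
      rw [Matrix.mul_apply, Finset.sum_eq_single i]
      · simp [Zm]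
      · intro b _ hb
        have : ¬ (i = b) := fun hc => hb hc.symm
        simp [Zm, this]
      · intro hmem; exact absurd (Finset.mem_univ _) hmem
    have h2 : (Ym * Zm) i j = Ym i j * q ^ (-(n : ℤ) - 2 * (j : ℤ)) := by
      rw [Matrix.mul_apply, Finset.sum_eq_single j]
      · simp [Zm]
      · intro b _ hb
        simp [Zm, hb]
      · intro hmem; exact absurd (Finset.mem_univ _) hmem
    rw [Matrix.smul_apply, h1, h2, smul_eq_mul]
    by_cases hij : (j : ℕ) = (i : ℕ) + 1
    · have hz : q ^ (-(n : ℤ) - 2 * (i : ℤ)) = q ^ (2 : ℤ) * q ^ (-(n : ℤ) - 2 * (j : ℤ)) := by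
        rw [← zpow_add₀ h0]; congr 1
        have : (j : ℤ) = (i : ℤ) + 1 := by exact_mod_cast hij
        omega
      have h2q : q ^ (2 : ℕ) = q ^ (2 : ℤ) := by norm_cast
      rw [hz, h2q]; ring
    · have : Ym i j = 0 := by simp [Ym, hij]
      rw [this]; ring
  · ext i j
    have hXY : (Xm * Ym) i j = if (i : ℕ) = (j : ℕ) then
        q ^ (-(n : ℤ) - 2 * (i : ℤ) + 1) * qnum q ((n : ℤ) + (i : ℤ) - 1) * qnum q ((i : ℕ) : ℤ)
        else 0 := by
      rw [Matrix.mul_apply]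
      by_cases hij : (i : ℕ) = (j : ℕ)
      · rw [if_pos hij]
        rcases Nat.eq_zero_or_pos (i : ℕ) with hi0 | hi1
        · rw [Finset.sum_eq_zero, hi0]
          · simp [qnum_zero]
          · intro k _
            have : ¬ ((i : ℕ) = (k : ℕ) + 1) := by omega
            simp [Xm, Matrix.of_apply, this]
        · have hklt : (i : ℕ) - 1 < d := by omega
          rw [Finset.sum_eq_single (⟨(i : ℕ) - 1, hklt⟩ : Fin d)]
          · have h1 : (i : ℕ) = ((⟨(i : ℕ) - 1, hklt⟩ : Fin d) : ℕ) + 1 := by simp; omega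
            have h2 : (j : ℕ) = ((⟨(i : ℕ) - 1, hklt⟩ : Fin d) : ℕ) + 1 := by simp; omega
            simp only [Xm, Ym, Matrix.of_apply, if_pos h1, if_pos h2]
            have : ((j : ℕ) : ℤ) = ((i : ℕ) : ℤ) := by exact_mod_cast hij.symm
            rw [this]
          · intro b _ hb
            have : ¬ ((i : ℕ) = (b : ℕ) + 1) := by
              intro hc
              apply hb
              apply Fin.ext
              simp
              omega
            simp [Xm, Matrix.of_apply, this]
          · intro hmem; exact absurd (Finset.mem_univ _) hmem
      · rw [if_neg hij]
        apply Finset.sum_eq_zero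
        intro k _
        by_cases h1 : (i : ℕ) = (k : ℕ) + 1
        · have h2 : ¬ ((j : ℕ) = (k : ℕ) + 1) := by omega
          simp [Ym, Matrix.of_apply, h2]
        · simp [Xm, Matrix.of_apply, h1]
    have hYX : (Ym * Xm) i j = if (i : ℕ) = (j : ℕ) then
        qnum q (((i : ℕ) : ℤ) + 1) *
          (q ^ (-(n : ℤ) - 2 * ((i : ℤ) + 1) + 1) * qnum q ((n : ℤ) + ((i : ℤ) + 1) - 1))
        else 0 := by
      rw [Matrix.mul_apply]
      by_cases hij : (i : ℕ) = (j : ℕ)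
      · rw [if_pos hij]
        rcases Nat.lt_or_ge ((i : ℕ) + 1) d with hlt | hge
        · rw [Finset.sum_eq_single (⟨(i : ℕ) + 1, hlt⟩ : Fin d)]
          · have h1 : ((⟨(i : ℕ) + 1, hlt⟩ : Fin d) : ℕ) = (i : ℕ) + 1 := rfl
            have h2 : ((⟨(i : ℕ) + 1, hlt⟩ : Fin d) : ℕ) = (j : ℕ) + 1 := by simp; omega
            have hc : (((⟨(i : ℕ) + 1, hlt⟩ : Fin d) : ℕ) : ℤ) = (i : ℤ) + 1 := by
              rw [h1]; push_cast; ring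
            simp only [Xm, Ym, Matrix.of_apply, if_pos h1, if_pos h2, if_true, hc]
          · intro b _ hb
            have : ¬ ((b : ℕ) = (i : ℕ) + 1) := by
              intro hc
              apply hb
              apply Fin.ext
              simp [hc]
            simp [Ym, Matrix.of_apply, this]
          · intro hmem; exact absurd (Finset.mem_univ _) hmem
        · rw [Finset.sum_eq_zero]
          · have hiQ : (n : ℤ) + ((i : ℤ) + 1) - 1 = (Q : ℤ) := by
              have : (i : ℕ) = d - 1 := by omega
              have : (i : ℕ) + n = Q := by omega
              push_cast [← this]
              ring
            rw [hiQ, hqnumQ]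
            ring
          · intro k _
            have : ¬ ((k : ℕ) = (i : ℕ) + 1) := by omega
            simp [Ym, Matrix.of_apply, this]
      · rw [if_neg hij]
        apply Finset.sum_eq_zero
        intro k _
        by_cases h1 : (k : ℕ) = (i : ℕ) + 1
        · have h2 : ¬ ((k : ℕ) = (j : ℕ) + 1) := by omega
          simp [Xm, Matrix.of_apply, h2]
        · simp [Ym, Matrix.of_apply, h1]
    have hZ2 : (Zm ^ 2) i j = if i = j then
        q ^ (-(n : ℤ) - 2 * (i : ℤ)) * q ^ (-(n : ℤ) - 2 * (i : ℤ)) else 0 := by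
      rw [pow_two, Matrix.mul_apply]
      simp only [Zm, Matrix.of_apply, ite_mul, mul_ite, zero_mul, mul_zero,
        Finset.sum_ite_eq, Finset.mem_univ, if_true]
      by_cases hij : i = j
      · simp [hij]
      · simp [hij]
    simp only [Matrix.sub_apply, Matrix.smul_apply, Matrix.neg_apply, Matrix.one_apply,
      hXY, hYX, hZ2, smul_eq_mul]
    by_cases hij : i = j
    · have hijn : (i : ℕ) = (j : ℕ) := by rw [hij]
      rw [if_pos hijn, if_pos hijn, if_pos hij, if_pos hij]
      have := key q h0 (n : ℤ) ((i : ℕ) : ℤ)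
      calc q⁻¹ * (q ^ (-(n : ℤ) - 2 * (i : ℤ) + 1) * qnum q ((n : ℤ) + (i : ℤ) - 1) * qnum q ((i : ℕ) : ℤ))
            - q * (qnum q (((i : ℕ) : ℤ) + 1) *
              (q ^ (-(n : ℤ) - 2 * ((i : ℤ) + 1) + 1) * qnum q ((n : ℤ) + ((i : ℤ) + 1) - 1)))
          = -((q - q⁻¹)⁻¹ * (1 - q ^ (-(n : ℤ) - 2 * (i : ℤ)) * q ^ (-(n : ℤ) - 2 * (i : ℤ)))) := this
        _ = _ := by rfl
    · have hijn : ¬ ((i : ℕ) = (j : ℕ)) := fun hc => hij (Fin.ext hc)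
      rw [if_neg hijn, if_neg hijn, if_neg hij, if_neg hij]
      ring
end

section
/- Let Q be an odd positive integer, P ∈ {1,...,Q−1} with gcd(P,Q) = 1, q = exp(iπP/Q), fix n ∈ {1,...,Q} and set d = Q+1−n. Let X̃, Ỹ, Z̃ be the d×d matrices with only nonzero entries X̃_{j,j−1} = q^{−n−2j+1}[n+j−1]_q and Ỹ_{j−1,j} = [j]_q for j = 1,...,d−1, and Z̃_{jj} = q^{−n−2j} for j = 0,...,d−1. Then the only linear subspaces W ⊆ ℂ^d satisfying X̃ W ⊆ W, Ỹ W ⊆ W and Z̃ W ⊆ W are {0} and ℂ^d; i.e., the representation ρ̃ is irreducible. -/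
lemma qpow_dvd (Q P : ℕ) (hQpos : 0 < Q) (hcop : Nat.Coprime P Q)
    (q : ℂ) (hq : q = Complex.exp (↑Real.pi * Complex.I * (P : ℂ) / (Q : ℂ)))
    (m : ℤ) (h : q ^ m = 1) : (Q : ℤ) ∣ m := by
  have hQ0 : (Q : ℂ) ≠ 0 := Nat.cast_ne_zero.mpr hQpos.ne'
  have hπ : (Real.pi : ℂ) ≠ 0 := by
    exact_mod_cast Real.pi_ne_zero
  rw [hq, ← Complex.exp_int_mul] at h
  rw [Complex.exp_eq_one_iff] at h
  obtain ⟨k, hk⟩ := h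
  have h2 : ((Real.pi : ℂ) * Complex.I) * ((m * P : ℤ) : ℂ) =
      ((Real.pi : ℂ) * Complex.I) * ((2 * k * Q : ℤ) : ℂ) := by
    push_cast
    field_simp at hk
    linear_combination (↑Real.pi * Complex.I) * hk
  have h3 : ((m * P : ℤ) : ℂ) = ((2 * k * Q : ℤ) : ℂ) :=
    mul_left_cancel₀ (mul_ne_zero hπ Complex.I_ne_zero) h2
  have h4 : m * P = 2 * k * Q := by exact_mod_cast h3
  have hdvd : (Q : ℤ) ∣ m * P := ⟨2 * k, by linarith⟩
  have hcop' : IsCoprime (Q : ℤ) (P : ℤ) := by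
    rw [Int.isCoprime_iff_gcd_eq_one]
    simpa [Nat.Coprime, Nat.gcd_comm] using hcop
  exact hcop'.dvd_of_dvd_mul_right hdvd

lemma qnum_ne (Q P : ℕ) (hQodd : Odd Q) (hQ2 : 2 ≤ Q) (hcop : Nat.Coprime P Q)
    (q : ℂ) (hq : q = Complex.exp (↑Real.pi * Complex.I * (P : ℂ) / (Q : ℂ)))
    (j : ℤ) (hj : ¬ (Q : ℤ) ∣ j) : qnum q j ≠ 0 := by
  have hQpos : 0 < Q := by omega
  have hq0 : q ≠ 0 := by rw [hq]; exact Complex.exp_ne_zero _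
  have hodd : ¬ (2 : ℤ) ∣ (Q : ℤ) := by
    rcases hQodd with ⟨k, hk⟩
    omega
  have key : ∀ m : ℤ, q ^ m = q ^ (-m) → (Q : ℤ) ∣ m := by
    intro m hm
    have h1 : q ^ (2 * m) = 1 := by
      have : q ^ (2 * m) = q ^ m * q ^ m := by
        rw [← zpow_add₀ hq0]; ring_nf
      rw [this]
      nth_rewrite 2 [hm]
      rw [← zpow_add₀ hq0, add_neg_cancel, zpow_zero]
    have h2 := qpow_dvd Q P hQpos hcop q hq _ h1
    have hc : IsCoprime (Q : ℤ) (2 : ℤ) := by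
      rw [Int.isCoprime_iff_gcd_eq_one]
      rcases hQodd with ⟨k, hk⟩
      subst hk
      simp [Int.gcd]
    exact hc.dvd_of_dvd_mul_left h2
  have hnum : q ^ j - q ^ (-j) ≠ 0 := by
    intro h
    exact hj (key j (sub_eq_zero.mp h))
  have hden : q - q⁻¹ ≠ 0 := by
    intro h
    have h1 : q ^ (1 : ℤ) = q ^ (-1 : ℤ) := by
      simpa [zpow_one, zpow_neg] using sub_eq_zero.mp h
    have h2 := key 1 h1
    have := Int.le_of_dvd one_pos h2
    omega
  rw [qnum]
  exact div_ne_zero hnum hden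


/-- For `q = exp(iπP/Q)`, `n ∈ {1,...,Q}`, `d = Q+1−n`, the representation `ρ̃`
given by the matrices `X̃, Ỹ, Z̃` on `ℂ^d` is irreducible: the only subspaces invariant under
all three matrices are `{0}` and `ℂ^d`. -/
theorem stmt_8 (Q P : ℕ) (hQodd : Odd Q) (hQpos : 0 < Q)
    (hP1 : 1 ≤ P) (hPQ : P ≤ Q - 1) (hcop : Nat.Coprime P Q)
    (q : ℂ) (hq : q = Complex.exp (↑Real.pi * Complex.I * (P : ℂ) / (Q : ℂ)))
    (n : ℕ) (hn1 : 1 ≤ n) (hnQ : n ≤ Q) (d : ℕ) (hd : d = Q + 1 - n) :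
    let Xm : Matrix (Fin d) (Fin d) ℂ := Matrix.of fun i j =>
      if (i : ℕ) = (j : ℕ) + 1 then
        q ^ (-(n : ℤ) - 2 * (i : ℤ) + 1) * qnum q ((n : ℤ) + (i : ℤ) - 1) else 0
    let Ym : Matrix (Fin d) (Fin d) ℂ := Matrix.of fun i j =>
      if (j : ℕ) = (i : ℕ) + 1 then qnum q (j : ℤ) else 0
    let Zm : Matrix (Fin d) (Fin d) ℂ := Matrix.of fun i j =>
      if i = j then q ^ (-(n : ℤ) - 2 * (i : ℤ)) else 0
    ∀ W : Submodule ℂ (Fin d → ℂ),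
      (∀ v ∈ W, Xm.mulVec v ∈ W) → (∀ v ∈ W, Ym.mulVec v ∈ W) →
      (∀ v ∈ W, Zm.mulVec v ∈ W) → W = ⊥ ∨ W = ⊤ := by
  intro Xm Ym Zm W hX hY hZ
  classical
  have hQ3 : 3 ≤ Q := by rcases hQodd with ⟨k, hk⟩; omega
  have hQ2 : 2 ≤ Q := by omega
  have hd0 : 0 < d := by omega
  have hdQ : d ≤ Q := by omega
  have hq0 : q ≠ 0 := by rw [hq]; exact Complex.exp_ne_zero _
  have hqn : ∀ j : ℕ, 0 < j → j < Q → qnum q (j : ℤ) ≠ 0 := by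
    intro j h1 h2
    apply qnum_ne Q P hQodd hQ2 hcop q hq
    intro hdvd
    have := Int.le_of_dvd (by exact_mod_cast h1) hdvd
    omega
  by_cases hbot : W = ⊥
  · left; exact hbot
  right
  obtain ⟨v, hvW, hv0⟩ := (Submodule.ne_bot_iff W).mp hbot
  -- computation of Ym.mulVec
  have hYm1 : ∀ (u : Fin d → ℂ) (j : Fin d) (hj : (j : ℕ) + 1 < d),
      Ym.mulVec u j = qnum q ((((j : ℕ) + 1 : ℕ)) : ℤ) * u ⟨(j : ℕ) + 1, hj⟩ := by
    intro u j hj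
    rw [Matrix.mulVec, dotProduct]
    rw [Finset.sum_eq_single (⟨(j : ℕ) + 1, hj⟩ : Fin d)]
    · simp [Ym]
    · intro b _ hb
      have hb2 : ((b : ℕ)) ≠ (j : ℕ) + 1 := fun h => hb (Fin.ext h)
      simp [Ym, hb2]
    · intro h; exact absurd (Finset.mem_univ _) h
  have hYm0 : ∀ (u : Fin d → ℂ) (j : Fin d), ¬ ((j : ℕ) + 1 < d) → Ym.mulVec u j = 0 := by
    intro u j hj
    rw [Matrix.mulVec, dotProduct]
    apply Finset.sum_eq_zero
    intro b _
    have hb2 : ((b : ℕ)) ≠ (j : ℕ) + 1 := by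
      have := b.isLt; omega
    simp [Ym, hb2]
  -- descent: e₀ ∈ W
  have e0 : Pi.single (⟨0, hd0⟩ : Fin d) (1 : ℂ) ∈ W := by
    have claim : ∀ m : ℕ, ∀ hm : m < d, ∀ u, u ∈ W →
        (∀ j : Fin d, m < (j : ℕ) → u j = 0) → u ⟨m, hm⟩ ≠ 0 →
        Pi.single (⟨0, hd0⟩ : Fin d) (1 : ℂ) ∈ W := by
      intro m
      induction m with
      | zero =>
        intro hm u huW hsupp hu0
        have hrw : (Pi.single (⟨0, hd0⟩ : Fin d) (1 : ℂ) : Fin d → ℂ) = (u ⟨0, hd0⟩)⁻¹ • u := by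
          funext j
          rcases eq_or_ne j (⟨0, hd0⟩ : Fin d) with h | h
          · subst h
            rw [Pi.single_eq_same, Pi.smul_apply, smul_eq_mul, inv_mul_cancel₀ hu0]
          · have hj : 0 < (j : ℕ) :=
              Nat.pos_of_ne_zero (fun hh => h (Fin.ext hh))
            rw [Pi.single_eq_of_ne h, Pi.smul_apply, hsupp j hj, smul_zero]
        rw [hrw]
        exact W.smul_mem _ huW
      | succ m ih =>
        intro hm u huW hsupp hu0
        have hmd : m < d := by omega
        apply ih hmd (Ym.mulVec u) (hY u huW)
        · intro j hj
          by_cases hj1 : (j : ℕ) + 1 < d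
          · rw [hYm1 u j hj1, hsupp ⟨(j : ℕ) + 1, hj1⟩ (by simp; omega), mul_zero]
          · exact hYm0 u j hj1
        · rw [hYm1 u ⟨m, hmd⟩ (by simpa using hm)]
          apply mul_ne_zero
          · exact hqn (m + 1) (by omega) (by omega)
          · exact hu0
    have hS : (Finset.univ.filter (fun i : Fin d => v i ≠ 0)).Nonempty := by
      by_contra h
      apply hv0
      funext j
      by_contra hj
      exact h ⟨j, Finset.mem_filter.mpr ⟨Finset.mem_univ _, hj⟩⟩
    set i0 := (Finset.univ.filter (fun i : Fin d => v i ≠ 0)).max' hS with hi0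
    have hmem := (Finset.univ.filter (fun i : Fin d => v i ≠ 0)).max'_mem hS
    rw [← hi0] at hmem
    have hv_i0 : v i0 ≠ 0 := (Finset.mem_filter.mp hmem).2
    apply claim (i0 : ℕ) i0.isLt v hvW
    · intro j hj
      by_contra hvj
      have hjm : j ≤ i0 := Finset.le_max' _ j (Finset.mem_filter.mpr ⟨Finset.mem_univ _, hvj⟩)
      have : (j : ℕ) ≤ (i0 : ℕ) := hjm
      omega
    · exact hv_i0
  -- ascent: all eₖ ∈ W
  have hXm : ∀ (k : ℕ) (hk : k < d) (hk1 : k + 1 < d),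
      Xm.mulVec (Pi.single (⟨k, hk⟩ : Fin d) (1 : ℂ)) =
        Pi.single (⟨k + 1, hk1⟩ : Fin d)
          (q ^ (-(n : ℤ) - 2 * ((k : ℤ) + 1) + 1) * qnum q ((n : ℤ) + ((k : ℤ) + 1) - 1)) := by
    intro k hk hk1
    funext i
    rw [Matrix.mulVec, dotProduct]
    rw [Finset.sum_eq_single (⟨k, hk⟩ : Fin d)]
    · rw [Pi.single_eq_same, mul_one]
      rcases eq_or_ne i (⟨k + 1, hk1⟩ : Fin d) with h | h
      · subst h
        rw [Pi.single_eq_same]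
        simp only [Xm, Matrix.of_apply]
        simp only [if_true, ite_true]
        push_cast
        ring_nf
      · have h2 : (i : ℕ) ≠ k + 1 := fun hh => h (Fin.ext hh)
        simp only [Xm, Matrix.of_apply]
        rw [if_neg h2, Pi.single_eq_of_ne h]
    · intro b _ hb
      rw [Pi.single_eq_of_ne hb, mul_zero]
    · intro h; exact absurd (Finset.mem_univ _) h
  have hek : ∀ k, ∀ hk : k < d, Pi.single (⟨k, hk⟩ : Fin d) (1 : ℂ) ∈ W := by
    intro k
    induction k with
    | zero => intro hk; exact e0
    | succ k ih =>
      intro hk1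
      have hk : k < d := by omega
      have h1 := hX _ (ih hk)
      rw [hXm k hk hk1] at h1
      set c := q ^ (-(n : ℤ) - 2 * ((k : ℤ) + 1) + 1) * qnum q ((n : ℤ) + ((k : ℤ) + 1) - 1)
        with hc_def
      have hcast : (n : ℤ) + ((k : ℤ) + 1) - 1 = ((n + k : ℕ) : ℤ) := by push_cast; ring
      have hc : c ≠ 0 := by
        apply mul_ne_zero (zpow_ne_zero _ hq0)
        rw [hcast]
        exact hqn (n + k) (by omega) (by omega)
      have hrw : Pi.single (⟨k + 1, hk1⟩ : Fin d) (1 : ℂ) =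
          c⁻¹ • (Pi.single (⟨k + 1, hk1⟩ : Fin d) c : Fin d → ℂ) := by
        rw [← Pi.single_smul]
        rw [smul_eq_mul, inv_mul_cancel₀ hc]
      rw [hrw]
      exact W.smul_mem _ h1
  -- conclude W = ⊤
  rw [Submodule.eq_top_iff']
  intro x
  have hx : x = ∑ i : Fin d, x i • (Pi.single i (1 : ℂ) : Fin d → ℂ) := by
    funext j
    rw [Finset.sum_apply]
    rw [Finset.sum_eq_single j]
    · simp
    · intro b _ hb
      simp [Pi.single_eq_of_ne (Ne.symm hb)]
    · intro h; exact absurd (Finset.mem_univ _) h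
  rw [hx]
  apply Submodule.sum_mem
  intro i _
  exact W.smul_mem _ (hek (i : ℕ) i.isLt)
end

section
/- Let q ∈ ℂ with q ≠ 0 and q² ≠ 1, and let n ∈ ℤ. On the vector space of functions f : ℂ∖{0} → ℂ define linear operators X, Y, Z by (X f)(w) = −i q⁻¹ w (q^n f(w) − q^{−n} f(q⁻² w))/(q − q⁻¹), (Y f)(w) = i q^{−n+1} (f(w) − f(q⁻² w))/((q − q⁻¹) w), (Z f)(w) = q^{−n} f(q⁻² w). Then Z X = q⁻² X Z, Z Y = q² Y Z, and q⁻¹ X Y − q Y X = −(1 − Z²)/(q − q⁻¹) as operators, i.e. this action makes the function space a module over the algebra with generators X, Y, Z and these defining relations. -/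
set_option maxHeartbeats 1000000


/-- The point `q⁻² w` of the punctured complex plane. -/
noncomputable def shiftPt (q : ℂ) (hq : q ≠ 0) (w : {z : ℂ // z ≠ 0}) : {z : ℂ // z ≠ 0} :=
  ⟨q ^ (-2 : ℤ) * (w : ℂ), mul_ne_zero (zpow_ne_zero _ hq) w.2⟩

/-- `(X f)(w) = −i q⁻¹ w (qⁿ f(w) − q⁻ⁿ f(q⁻² w))/(q − q⁻¹)`. -/
noncomputable def Xop (q : ℂ) (hq : q ≠ 0) (n : ℤ) (f : {z : ℂ // z ≠ 0} → ℂ) :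
    {z : ℂ // z ≠ 0} → ℂ :=
  fun w => -Complex.I * q⁻¹ * (w : ℂ) * (q ^ n * f w - q ^ (-n) * f (shiftPt q hq w)) / (q - q⁻¹)

/-- `(Y f)(w) = i q^(−n+1) (f(w) − f(q⁻² w))/((q − q⁻¹) w)`. -/
noncomputable def Yop (q : ℂ) (hq : q ≠ 0) (n : ℤ) (f : {z : ℂ // z ≠ 0} → ℂ) :
    {z : ℂ // z ≠ 0} → ℂ :=
  fun w => Complex.I * q ^ (-n + 1) * (f w - f (shiftPt q hq w)) / ((q - q⁻¹) * (w : ℂ))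

/-- `(Z f)(w) = q⁻ⁿ f(q⁻² w)`. -/
noncomputable def Zop (q : ℂ) (hq : q ≠ 0) (n : ℤ) (f : {z : ℂ // z ≠ 0} → ℂ) :
    {z : ℂ // z ≠ 0} → ℂ :=
  fun w => q ^ (-n) * f (shiftPt q hq w)

/-- For `q ≠ 0`, `q² ≠ 1` and `n ∈ ℤ`, the operators `X, Y, Z` on functions
`ℂ∖{0} → ℂ` satisfy `Z X = q⁻² X Z`, `Z Y = q² Y Z` and
`q⁻¹ X Y − q Y X = −(1 − Z²)/(q − q⁻¹)`. -/
theorem stmt_9 (q : ℂ) (hq0 : q ≠ 0) (hq2 : q ^ 2 ≠ 1) (n : ℤ) :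
    (∀ f : {z : ℂ // z ≠ 0} → ℂ,
      Zop q hq0 n (Xop q hq0 n f) = (q⁻¹ ^ 2) • Xop q hq0 n (Zop q hq0 n f)) ∧
    (∀ f : {z : ℂ // z ≠ 0} → ℂ,
      Zop q hq0 n (Yop q hq0 n f) = (q ^ 2) • Yop q hq0 n (Zop q hq0 n f)) ∧
    (∀ f : {z : ℂ // z ≠ 0} → ℂ,
      q⁻¹ • Xop q hq0 n (Yop q hq0 n f) - q • Yop q hq0 n (Xop q hq0 n f)
        = -((q - q⁻¹)⁻¹ • (f - Zop q hq0 n (Zop q hq0 n f)))) := by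

  have hq21 : q ^ 2 - 1 ≠ 0 := sub_ne_zero.mpr hq2
  have ha : q ^ n ≠ 0 := zpow_ne_zero _ hq0
  have key : ∀ m : ℤ, q ^ (-m) = (q ^ m)⁻¹ := fun m => zpow_neg q m
  have hs : ∀ w : {z : ℂ // z ≠ 0}, ((shiftPt q hq0 w : {z : ℂ // z ≠ 0}) : ℂ) = q ^ (-2 : ℤ) * (w : ℂ) := fun w => rfl
  have hq2' : (q : ℂ) ^ (-2 : ℤ) = (q ^ 2)⁻¹ := by
    rw [zpow_neg]; norm_cast
  have hn1 : q ^ (-n + 1) = (q ^ n)⁻¹ * q := by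
    rw [zpow_add₀ hq0, zpow_neg, zpow_one]
  obtain ⟨s, hs2⟩ : ∃ s : ℂ, s = q ^ 2 - 1 := ⟨_, rfl⟩
  have hsne : s ≠ 0 := by rw [hs2]; exact hq21
  have he : q - q⁻¹ = s / q := by rw [hs2]; field_simp
  obtain ⟨t, ht⟩ : ∃ t : ℂ, t = q ^ n := ⟨_, rfl⟩
  have htne : t ≠ 0 := by rw [ht]; exact ha
  have hkey : q ^ (-n) = t⁻¹ := by rw [key, ht]
  have hn1' : q ^ (-n + 1) = t⁻¹ * q := by rw [hn1, ht]
  have hn' : q ^ n = t := ht.symm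
  obtain ⟨D, hD⟩ : ∃ D : ℂ, D = q - q⁻¹ := ⟨_, rfl⟩
  have hDne : D ≠ 0 := by
    rw [hD, he]; exact div_ne_zero hsne hq0
  refine ⟨?_, ?_, ?_⟩
  · intro f
    funext w
    simp only [Zop, Xop, smul_eq_mul, Pi.smul_apply, hs, hkey, hn', hn1', hq2', he]
    field_simp
  · intro f
    funext w
    simp only [Zop, Yop, smul_eq_mul, Pi.smul_apply, hs, hkey, hn', hn1', hq2', he]
    have hw : (w : ℂ) ≠ 0 := w.2
    field_simp
  · intro f
    funext w
    have hw : (w : ℂ) ≠ 0 := w.2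
    have hXY : Xop q hq0 n (Yop q hq0 n f) w =
        (t ^ 2 * (f w - f (shiftPt q hq0 w)) -
          q ^ 2 * (f (shiftPt q hq0 w) - f (shiftPt q hq0 (shiftPt q hq0 w)))) /
        (t ^ 2 * D ^ 2) := by
      simp only [Xop, Yop, hs, hkey, hn', hn1', hq2', ← hD]
      field_simp
      ring_nf
      simp only [Complex.I_sq]
      ring
    have hXw : Xop q hq0 n f w = -(Complex.I * (w : ℂ) * (t ^ 2 * f w - f (shiftPt q hq0 w))) /
        (q * t * D) := by
      simp only [Xop, hs, hkey, hn', hn1', hq2', ← hD]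
      field_simp
      try rw [div_eq_iff (by simp [hq0, htne, hDne, hw])]
      try ring
    have hXs : Xop q hq0 n f (shiftPt q hq0 w) =
        -(Complex.I * (w : ℂ) * (t ^ 2 * f (shiftPt q hq0 w) -
          f (shiftPt q hq0 (shiftPt q hq0 w)))) / (q ^ 3 * t * D) := by
      simp only [Xop, hs, hkey, hn', hn1', hq2', ← hD]
      field_simp
    have hYX : Yop q hq0 n (Xop q hq0 n f) w =
        (q ^ 2 * t ^ 2 * f w - q ^ 2 * f (shiftPt q hq0 w)
          - t ^ 2 * f (shiftPt q hq0 w) + f (shiftPt q hq0 (shiftPt q hq0 w))) /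
        (t ^ 2 * q ^ 2 * D ^ 2) := by
      simp only [Yop, hs, hkey, hn', hn1', hq2', ← hD]
      rw [hXw, hXs]
      field_simp
      ring_nf
      simp only [Complex.I_sq]
      ring
    simp only [Pi.smul_apply, Pi.sub_apply, Pi.neg_apply, smul_eq_mul, hXY, hYX, Zop, hkey]
    have h3 : -((q - q⁻¹)⁻¹ * (f w - t⁻¹ * (t⁻¹ * f (shiftPt q hq0 (shiftPt q hq0 w))))) =
        -(t ^ 2 * f w - f (shiftPt q hq0 (shiftPt q hq0 w))) / (t ^ 2 * D) := by
      simp only [← hD]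
      field_simp
      try rw [div_eq_iff (by simp [htne, hDne])]
      try ring
    rw [h3, show D = s / q from by rw [hD, he]]
    field_simp
    try rw [div_eq_iff (by simp [hq0, htne, hsne, hw])]
    rw [hs2]
    ring
end

section
/- Let Q be an odd positive integer, P ∈ {1,...,Q−1} with gcd(P,Q) = 1, q = exp(iπP/Q), fix n ∈ {1,...,Q} and set d = Q+1−n. For j ∈ ℤ, j ≥ 0, define the function φ_j : ℂ∖{0} → ℂ by φ_j(w) = (−i)^j q^{j(j−1)/2 + n j} w^{−Q+j}, and define operators X, Y, Z on functions on ℂ∖{0} by (X f)(w) = −i q⁻¹ w (q^n f(w) − q^{−n} f(q⁻² w))/(q − q⁻¹), (Y f)(w) = i q^{−n+1} (f(w) − f(q⁻² w))/((q − q⁻¹) w), (Z f)(w) = q^{−n} f(q⁻² w). Then for 0 ≤ j ≤ d−1: Z·φ_j = q^{−n−2j} φ_j; X·φ_j = q^{−n−2j−1}[n+j]_q φ_{j+1} (in particular X·φ_{d−1} = 0 since [n+d−1]_q = [Q]_q = 0); Y·φ_j = [j]_q φ_{j−1} for j ≥ 1 and Y·φ_0 = 0. -/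
/-- The function `φ_j(w) = (−i)^j q^(j(j−1)/2 + n j) w^(−Q+j)`. -/
noncomputable def phi (q : ℂ) (Q n j : ℕ) : {z : ℂ // z ≠ 0} → ℂ :=
  fun w => (-Complex.I) ^ j * q ^ (j * (j - 1) / 2 + n * j) * (w : ℂ) ^ (-(Q : ℤ) + (j : ℤ))

lemma phi_shift_aux (q : ℂ) (hq0 : q ≠ 0) (Q n j : ℕ)
    (h2Q : q ^ (2 * (Q:ℤ)) = 1) (w : {z : ℂ // z ≠ 0}) :
    phi q Q n j (shiftPt q hq0 w) = q ^ (-2 * (j:ℤ)) * phi q Q n j w := by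
  simp only [phi, shiftPt]
  rw [mul_zpow, ← zpow_mul]
  rw [show (-2 : ℤ) * (-(Q:ℤ) + j) = 2*(Q:ℤ) + (-2 * j) by ring, zpow_add₀ hq0, h2Q, one_mul]
  ring

lemma phi_succ_aux (q : ℂ) (Q n j : ℕ) (w : {z : ℂ // z ≠ 0}) :
    phi q Q n (j+1) w = -Complex.I * q ^ (n + j : ℕ) * ((w:ℂ) * phi q Q n j w) := by
  simp only [phi]
  have h1 : (j+1) * ((j+1) - 1) = j*(j-1) + 2*j := by
    cases j with
    | zero => rfl
    | succ k => simp only [Nat.add_sub_cancel]; ring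
  have he : (j+1) * ((j+1) - 1) / 2 + n * (j+1) = (j * (j-1)/2 + n * j) + (n + j) := by
    rw [h1, Nat.add_mul_div_left _ _ (by norm_num : 0 < 2)]
    ring
  rw [he, pow_add]
  rw [show (-(Q:ℤ) + ((j:ℕ)+1 : ℕ)) = (-(Q:ℤ)+(j:ℤ)) + 1 by push_cast; ring, zpow_add_one₀ w.2]
  ring

lemma Xop_phi_aux (q : ℂ) (hq0 : q ≠ 0) (Q n j : ℕ)
    (h2Q : q ^ (2 * (Q:ℤ)) = 1) :
    Xop q hq0 (n : ℤ) (phi q Q n j)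
      = (q ^ (-(n : ℤ) - 2 * (j : ℤ) - 1) * qnum q ((n : ℤ) + (j : ℤ))) • phi q Q n (j + 1) := by
  funext w
  simp only [Xop, Pi.smul_apply, smul_eq_mul, qnum]
  rw [phi_shift_aux q hq0 Q n j h2Q w, phi_succ_aux q Q n j w]
  have hdiv : ∀ (a b z c : ℂ), a * (b / c) * z = (a * b * z) / c := fun a b z c => by ring
  rw [hdiv]
  refine congrArg (· / (q - q⁻¹)) ?_
  have key : q⁻¹ * (q^(n:ℤ) - q^(-(n:ℤ)) * q^(-2*(j:ℤ)))
      = q ^ (-(n:ℤ) - 2*(j:ℤ) - 1) * (q^((n:ℤ)+(j:ℤ)) - q^(-((n:ℤ)+(j:ℤ)))) * q^((n+j : ℕ)) := by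
    rw [← zpow_neg_one q, ← zpow_natCast q (n+j)]
    push_cast
    simp only [mul_sub, sub_mul, ← zpow_add₀ hq0]
    congr 1 <;> congr 1 <;> ring
  linear_combination (-Complex.I * (w:ℂ) * phi q Q n j w) * key

lemma Yop_phi_aux (q : ℂ) (hq0 : q ≠ 0) (Q n k : ℕ)
    (h2Q : q ^ (2 * (Q:ℤ)) = 1) :
    Yop q hq0 (n : ℤ) (phi q Q n (k+1)) = (qnum q ((k+1 : ℕ) : ℤ)) • phi q Q n k := by
  funext w
  simp only [Yop, Pi.smul_apply, smul_eq_mul, qnum]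
  rw [phi_shift_aux q hq0 Q n (k+1) h2Q w, phi_succ_aux q Q n k w]
  rw [← div_div, div_eq_iff w.2]
  have hdiv : ∀ (a b z c : ℂ), a / c * z * b = (a * z * b) / c := fun a b z c => by ring
  rw [hdiv]
  refine congrArg (· / (q - q⁻¹)) ?_
  have key : q^(-(n:ℤ)+1) * (1 - q^(-2*((k:ℤ)+1))) * q^((n+k : ℕ))
      = q^(((k:ℕ)+1 : ℤ)) - q^(-((k:ℕ)+1 : ℤ)) := by
    rw [← zpow_natCast q (n+k)]
    push_cast
    simp only [mul_sub, sub_mul, mul_one, one_mul, ← zpow_add₀ hq0]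
    congr 1 <;> congr 1 <;> ring
  push_cast
  linear_combination (Complex.I * -Complex.I * (w:ℂ) * phi q Q n k w) * key +
    ((q^(-((k:ℕ)+1 : ℤ)) - q^(((k:ℕ)+1 : ℤ))) * (w:ℂ) * phi q Q n k w) * Complex.I_sq


/-- For `q = exp(iπP/Q)`, `n ∈ {1,...,Q}`, `d = Q+1−n` and `0 ≤ j ≤ d−1`:
`Z·φ_j = q^(−n−2j) φ_j`; `X·φ_j = q^(−n−2j−1)[n+j]_q φ_{j+1}` (in particular `X·φ_{d−1} = 0`
since `[n+d−1]_q = [Q]_q = 0`); `Y·φ_j = [j]_q φ_{j−1}` for `j ≥ 1`, and `Y·φ_0 = 0`. -/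
theorem stmt_10 (Q P : ℕ) (hQodd : Odd Q) (hQpos : 0 < Q)
    (hP1 : 1 ≤ P) (hPQ : P ≤ Q - 1) (hcop : Nat.Coprime P Q)
    (q : ℂ) (hq : q = Complex.exp (↑Real.pi * Complex.I * (P : ℂ) / (Q : ℂ)))
    (hq0 : q ≠ 0)
    (n : ℕ) (hn1 : 1 ≤ n) (hnQ : n ≤ Q) (d : ℕ) (hd : d = Q + 1 - n) :
    (∀ j : ℕ, j ≤ d - 1 →
        Zop q hq0 (n : ℤ) (phi q Q n j) = (q ^ (-(n : ℤ) - 2 * (j : ℤ))) • phi q Q n j) ∧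
    (∀ j : ℕ, j ≤ d - 1 →
        Xop q hq0 (n : ℤ) (phi q Q n j)
          = (q ^ (-(n : ℤ) - 2 * (j : ℤ) - 1) * qnum q ((n : ℤ) + (j : ℤ))) • phi q Q n (j + 1)) ∧
    (qnum q ((n : ℤ) + (d : ℤ) - 1) = 0 ∧ Xop q hq0 (n : ℤ) (phi q Q n (d - 1)) = 0) ∧
    (∀ j : ℕ, 1 ≤ j → j ≤ d - 1 →
        Yop q hq0 (n : ℤ) (phi q Q n j) = (qnum q (j : ℤ)) • phi q Q n (j - 1)) ∧
    Yop q hq0 (n : ℤ) (phi q Q n 0) = 0 := by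
  have hQ0 : (Q:ℂ) ≠ 0 := Nat.cast_ne_zero.mpr hQpos.ne'
  have hqQ : q ^ Q = (-1 : ℂ) ^ P := by
    rw [hq, ← Complex.exp_nat_mul]
    rw [show (Q:ℂ) * (↑Real.pi * Complex.I * ↑P / ↑Q) = (P:ℂ) * (↑Real.pi * Complex.I) by
      field_simp]
    rw [Complex.exp_nat_mul, Complex.exp_pi_mul_I]
  have hqQ' : q ^ (-(Q:ℤ)) = (-1 : ℂ) ^ P := by
    rw [zpow_neg, zpow_natCast, hqQ, ← inv_pow]
    norm_num
  have h2Q : q ^ (2 * (Q:ℤ)) = 1 := by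
    rw [mul_comm, zpow_mul, zpow_natCast, hqQ]
    rcases Nat.even_or_odd P with h | h
    · rw [h.neg_one_pow]; norm_num
    · rw [h.neg_one_pow]; norm_num
  have hqnumQ : qnum q ((Q:ℕ) : ℤ) = 0 := by
    rw [qnum, zpow_natCast, hqQ, hqQ', sub_self, zero_div]
  have hX : ∀ j : ℕ, Xop q hq0 (n : ℤ) (phi q Q n j)
      = (q ^ (-(n : ℤ) - 2 * (j : ℤ) - 1) * qnum q ((n : ℤ) + (j : ℤ))) • phi q Q n (j + 1) :=
    fun j => Xop_phi_aux q hq0 Q n j h2Q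
  refine ⟨fun j _ => ?_, fun j _ => hX j, ⟨?_, ?_⟩, fun j hj _ => ?_, ?_⟩
  · funext w
    simp only [Zop, Pi.smul_apply, smul_eq_mul]
    rw [phi_shift_aux q hq0 Q n j h2Q w, ← mul_assoc, ← zpow_add₀ hq0,
      show (-(n:ℤ)) + (-2*(j:ℤ)) = -(n:ℤ) - 2*(j:ℤ) by ring]
  · rw [show (n:ℤ) + (d:ℤ) - 1 = ((Q:ℕ):ℤ) by omega]
    exact hqnumQ
  · rw [hX (d-1), show ((n:ℤ) + ((d-1:ℕ):ℤ)) = ((Q:ℕ):ℤ) by omega, hqnumQ, mul_zero, zero_smul]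
  · obtain ⟨k, rfl⟩ : ∃ k, j = k + 1 := ⟨j - 1, by omega⟩
    rw [Nat.add_sub_cancel]
    exact Yop_phi_aux q hq0 Q n k h2Q
  · funext w
    simp only [Yop, Pi.zero_apply]
    rw [phi_shift_aux q hq0 Q n 0 h2Q w]
    norm_num
end

section
/- Let Q be an odd positive integer, P ∈ {1,...,Q−1} with gcd(P,Q) = 1, q = exp(iπP/Q), fix n ∈ {1,...,Q} and set d = Q+1−n. Define φ_j(w) = (−i)^j q^{j(j−1)/2 + n j} w^{−Q+j} for j = 0,...,d−1, and operators X, Y, Z on functions on ℂ∖{0} by (X f)(w) = −i q⁻¹ w (q^n f(w) − q^{−n} f(q⁻² w))/(q − q⁻¹), (Y f)(w) = i q^{−n+1} (f(w) − f(q⁻² w))/((q − q⁻¹) w), (Z f)(w) = q^{−n} f(q⁻² w). Then the ℂ-linear span of {φ_0, φ_1, ..., φ_{d−1}} is invariant under X, Y and Z. -/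
lemma tri (j : ℕ) : (j + 1) * j / 2 = j * (j - 1) / 2 + j := by
  cases j with
  | zero => rfl
  | succ k =>
    show (k + 2) * (k + 1) / 2 = (k + 1) * k / 2 + (k + 1)
    have : (k + 2) * (k + 1) = (k + 1) * k + (k + 1) * 2 := by ring
    rw [this, Nat.add_mul_div_right _ _ (by norm_num)]

lemma phi_shift (q : ℂ) (hq0 : q ≠ 0) (Q n j : ℕ) (w : {z : ℂ // z ≠ 0}) :
    phi q Q n j (shiftPt q hq0 w) = q ^ (2 * (Q : ℤ) - 2 * j) * phi q Q n j w := by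
  simp only [phi, shiftPt]
  rw [mul_zpow, ← zpow_mul, show (-2 : ℤ) * (-(Q : ℤ) + j) = 2 * (Q : ℤ) - 2 * j by ring]
  ring

lemma phi_succ (q : ℂ) (Q n j : ℕ) (w : {z : ℂ // z ≠ 0}) :
    phi q Q n (j + 1) w = -Complex.I * q ^ (j + n) * (w : ℂ) * phi q Q n j w := by
  simp only [phi]
  rw [show (j+1) * ((j+1) - 1) / 2 + n * (j+1) = (j * (j-1)/2 + n * j) + (j + n) by
        rw [Nat.succ_sub_one, tri j]; ring,
      pow_add, pow_succ,
      show (-(Q : ℤ) + ((j : ℕ) + 1 : ℕ)) = (-(Q : ℤ) + j) + 1 by push_cast; ring,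
      zpow_add_one₀ w.2]
  ring

lemma Z_phi (q : ℂ) (hq0 : q ≠ 0) (Q n j : ℕ) :
    Zop q hq0 n (phi q Q n j) = (q ^ (-(n : ℤ)) * q ^ (2 * (Q : ℤ) - 2 * j)) • phi q Q n j := by
  funext w
  simp only [Zop, phi_shift q hq0, Pi.smul_apply, smul_eq_mul]
  ring

lemma X_phi (q : ℂ) (hq0 : q ≠ 0) (Q n j : ℕ) :
    Xop q hq0 n (phi q Q n j) =
      (q⁻¹ * (q ^ (j + n))⁻¹ *
        (q ^ ((n : ℕ) : ℤ) - q ^ (-((n : ℕ) : ℤ)) * q ^ (2 * (Q : ℤ) - 2 * j)) / (q - q⁻¹)) •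
        phi q Q n (j + 1) := by
  funext w
  have hp : (q : ℂ) ^ (j + n) ≠ 0 := pow_ne_zero _ hq0
  simp only [Xop, phi_shift q hq0, Pi.smul_apply, smul_eq_mul, phi_succ]
  rw [div_mul_eq_mul_div]
  congr 1
  field_simp

lemma Y_phi (q : ℂ) (hq0 : q ≠ 0) (Q n j : ℕ) :
    Yop q hq0 n (phi q Q n (j + 1)) =
      (Complex.I * q ^ (-(n : ℤ) + 1) * (1 - q ^ (2 * (Q : ℤ) - 2 * ((j : ℤ) + 1))) *
        (-Complex.I) * q ^ (j + n) / (q - q⁻¹)) • phi q Q n j := by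
  funext w
  simp only [Yop, phi_shift q hq0, Pi.smul_apply, smul_eq_mul, phi_succ]
  have hw : (w : ℂ) ≠ 0 := w.2
  rw [show (2 * (Q:ℤ) - 2 * ((j:ℕ)+1:ℕ)) = 2 * (Q:ℤ) - 2*((j:ℤ)+1) by push_cast; ring]
  rw [mul_comm (q - q⁻¹) (w : ℂ), ← div_div, div_mul_eq_mul_div]
  congr 1
  field_simp
  ring

lemma Y_phi_zero (q : ℂ) (hq0 : q ≠ 0) (Q n : ℕ) (h1 : q ^ (2 * (Q : ℤ)) = 1) :
    Yop q hq0 n (phi q Q n 0) = 0 := by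
  funext w
  simp only [Yop, phi_shift q hq0, Pi.zero_apply]
  rw [show (2 * (Q : ℤ) - 2 * ((0:ℕ) : ℤ)) = 2 * (Q : ℤ) by push_cast; ring, h1]
  simp

lemma q_two_Q (Q P : ℕ) (hQpos : 0 < Q) (q : ℂ)
    (hq : q = Complex.exp (↑Real.pi * Complex.I * (P : ℂ) / (Q : ℂ))) :
    q ^ (2 * (Q : ℤ)) = 1 := by
  have hQ0 : (Q : ℂ) ≠ 0 := Nat.cast_ne_zero.mpr hQpos.ne'
  rw [show (2 * (Q : ℤ)) = ((2 * Q : ℕ) : ℤ) by push_cast; ring, zpow_natCast, hq,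
    ← Complex.exp_nat_mul]
  rw [show ((2 * Q : ℕ) : ℂ) * (↑Real.pi * Complex.I * (P : ℂ) / (Q : ℂ))
        = ((P : ℤ) : ℂ) * (2 * ↑Real.pi * Complex.I) by push_cast; field_simp]
  exact Complex.exp_int_mul_two_pi_mul_I P

lemma Xop_zero (q : ℂ) (hq : q ≠ 0) (n : ℤ) : Xop q hq n 0 = 0 := by
  funext w; simp [Xop]

lemma Xop_add (q : ℂ) (hq : q ≠ 0) (n : ℤ) (f g : {z : ℂ // z ≠ 0} → ℂ) :
    Xop q hq n (f + g) = Xop q hq n f + Xop q hq n g := by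
  funext w; simp only [Xop, Pi.add_apply]; ring

lemma Xop_smul (q : ℂ) (hq : q ≠ 0) (n : ℤ) (c : ℂ) (f : {z : ℂ // z ≠ 0} → ℂ) :
    Xop q hq n (c • f) = c • Xop q hq n f := by
  funext w; simp only [Xop, Pi.smul_apply, smul_eq_mul]; ring

lemma Yop_zero (q : ℂ) (hq : q ≠ 0) (n : ℤ) : Yop q hq n 0 = 0 := by
  funext w; simp [Yop]

lemma Yop_add (q : ℂ) (hq : q ≠ 0) (n : ℤ) (f g : {z : ℂ // z ≠ 0} → ℂ) :
    Yop q hq n (f + g) = Yop q hq n f + Yop q hq n g := by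
  funext w; simp only [Yop, Pi.add_apply]; ring

lemma Yop_smul (q : ℂ) (hq : q ≠ 0) (n : ℤ) (c : ℂ) (f : {z : ℂ // z ≠ 0} → ℂ) :
    Yop q hq n (c • f) = c • Yop q hq n f := by
  funext w; simp only [Yop, Pi.smul_apply, smul_eq_mul]; ring

lemma Zop_zero (q : ℂ) (hq : q ≠ 0) (n : ℤ) : Zop q hq n 0 = 0 := by
  funext w; simp [Zop]

lemma Zop_add (q : ℂ) (hq : q ≠ 0) (n : ℤ) (f g : {z : ℂ // z ≠ 0} → ℂ) :
    Zop q hq n (f + g) = Zop q hq n f + Zop q hq n g := by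
  funext w; simp only [Zop, Pi.add_apply]; ring

lemma Zop_smul (q : ℂ) (hq : q ≠ 0) (n : ℤ) (c : ℂ) (f : {z : ℂ // z ≠ 0} → ℂ) :
    Zop q hq n (c • f) = c • Zop q hq n f := by
  funext w; simp only [Zop, Pi.smul_apply, smul_eq_mul]; ring

/-- For `q = exp(iπP/Q)`, `n ∈ {1,...,Q}`, `d = Q+1−n`, the ℂ-linear span of
`{φ_0, φ_1, ..., φ_{d−1}}` is invariant under the operators `X`, `Y` and `Z`. -/
theorem stmt_11 (Q P : ℕ) (hQodd : Odd Q) (hQpos : 0 < Q)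
    (hP1 : 1 ≤ P) (hPQ : P ≤ Q - 1) (hcop : Nat.Coprime P Q)
    (q : ℂ) (hq : q = Complex.exp (↑Real.pi * Complex.I * (P : ℂ) / (Q : ℂ)))
    (hq0 : q ≠ 0)
    (n : ℕ) (hn1 : 1 ≤ n) (hnQ : n ≤ Q) (d : ℕ) (hd : d = Q + 1 - n) :
    let S : Submodule ℂ ({z : ℂ // z ≠ 0} → ℂ) :=
      Submodule.span ℂ (Set.range fun j : Fin d => phi q Q n (j : ℕ))
    ∀ f ∈ S, Xop q hq0 (n : ℤ) f ∈ S ∧ Yop q hq0 (n : ℤ) f ∈ S ∧ Zop q hq0 (n : ℤ) f ∈ S := by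
  intro S f hf
  have hq2Q : q ^ (2 * (Q : ℤ)) = 1 := q_two_Q Q P hQpos q hq
  have hmem : ∀ k, k < d → phi q Q n k ∈ S := fun k hk =>
    Submodule.subset_span ⟨⟨k, hk⟩, rfl⟩
  refine Submodule.span_induction
    (p := fun g _ => Xop q hq0 (n : ℤ) g ∈ S ∧ Yop q hq0 (n : ℤ) g ∈ S ∧ Zop q hq0 (n : ℤ) g ∈ S)
    ?_ ?_ ?_ ?_ hf
  · rintro x ⟨j, rfl⟩
    beta_reduce
    refine ⟨?_, ?_, ?_⟩
    · -- X
      by_cases h : (j : ℕ) + 1 < d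
      · rw [X_phi q hq0]
        exact S.smul_mem _ (hmem _ h)
      · -- top case: j = d - 1 = Q - n, coefficient vanishes
        have hj : ((j : ℕ) : ℤ) = (Q : ℤ) - n := by
          have := j.isLt
          omega
        rw [X_phi q hq0]
        have hz : q ^ ((n : ℕ) : ℤ) - q ^ (-((n : ℕ) : ℤ)) * q ^ (2 * (Q : ℤ) - 2 * (j : ℕ)) = 0 := by
          rw [← zpow_add₀ hq0, show (-((n:ℕ):ℤ) + (2 * (Q:ℤ) - 2 * (j:ℕ))) = ((n:ℕ):ℤ) by
            rw [hj]; ring, sub_self]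
        rw [hz]
        simp
    · -- Y
      rcases Nat.eq_zero_or_eq_succ_pred (j : ℕ) with h0 | hsucc
      · rw [h0, Y_phi_zero q hq0 Q n hq2Q]
        exact zero_mem S
      · rw [hsucc, Nat.succ_eq_add_one, Y_phi q hq0]
        exact S.smul_mem _ (hmem _ (by have := j.isLt; omega))
    · -- Z
      rw [Z_phi q hq0]
      exact S.smul_mem _ (hmem _ j.isLt)
  · exact ⟨by rw [Xop_zero]; exact zero_mem S, by rw [Yop_zero]; exact zero_mem S,
      by rw [Zop_zero]; exact zero_mem S⟩
  · rintro x y hx hy ⟨hx1, hx2, hx3⟩ ⟨hy1, hy2, hy3⟩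
    exact ⟨by rw [Xop_add]; exact S.add_mem hx1 hy1,
      by rw [Yop_add]; exact S.add_mem hx2 hy2,
      by rw [Zop_add]; exact S.add_mem hx3 hy3⟩
  · rintro c x hx ⟨hx1, hx2, hx3⟩
    exact ⟨by rw [Xop_smul]; exact S.smul_mem c hx1,
      by rw [Yop_smul]; exact S.smul_mem c hx2,
      by rw [Zop_smul]; exact S.smul_mem c hx3⟩
end

section
/- Let Q be an odd positive integer, P ∈ {1,...,Q−1} with gcd(P,Q) = 1, q = exp(iπP/Q), fix n ∈ {1,...,Q} and set d = Q+1−n. In the field ℂ(w) of rational functions, define ψ_m(w) = (∏_{j=0}^{m−1}(q^{2j+n} w − i)) / (∏_{j=0}^{n+m−1}(q^{2j−2m−n} w + i)) for m = 0,...,d−1, and let the operators X, Y, Z act on ℂ(w) by (X f)(w) = −i q⁻¹ w (q^n f(w) − q^{−n} f(q⁻² w))/(q − q⁻¹), (Y f)(w) = i q^{−n+1} (f(w) − f(q⁻² w))/((q − q⁻¹) w), (Z f)(w) = q^{−n} f(q⁻² w). Then the ℂ-linear span of {ψ_0, ψ_1, ..., ψ_{d−1}} is invariant under X, Y and Z.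 -/
/-- The rational function
`ψ_m(w) = (∏_{j=0}^{m−1}(q^{2j+n} w − i)) / (∏_{j=0}^{n+m−1}(q^{2j−2m−n} w + i))`. -/
noncomputable def psi (q : ℂ) (n m : ℕ) : RatFunc ℂ :=
  (∏ j ∈ Finset.range m,
      (algebraMap ℂ (RatFunc ℂ) (q ^ (2 * j + n)) * RatFunc.X
        - algebraMap ℂ (RatFunc ℂ) Complex.I)) /
  (∏ j ∈ Finset.range (n + m),
      (algebraMap ℂ (RatFunc ℂ) (q ^ (2 * (j : ℤ) - 2 * (m : ℤ) - (n : ℤ))) * RatFunc.X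
        + algebraMap ℂ (RatFunc ℂ) Complex.I))

namespace St12

open Finset

noncomputable def cc : ℂ →+* RatFunc ℂ := algebraMap ℂ (RatFunc ℂ)

lemma cc_def (z : ℂ) : cc z = algebraMap ℂ (RatFunc ℂ) z := rfl

noncomputable def Nz (q : ℂ) (n m : ℕ) : RatFunc ℂ :=
  ∏ j ∈ Finset.range m, (cc (q ^ (2*(j:ℤ)+(n:ℤ))) * RatFunc.X - cc Complex.I)

noncomputable def Dz (q : ℂ) (n m : ℕ) : RatFunc ℂ :=
  ∏ j ∈ Finset.range (n+m), (cc (q ^ (2*(j:ℤ)-2*(m:ℤ)-(n:ℤ))) * RatFunc.X + cc Complex.I)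

lemma psi_eq_div (q : ℂ) (n m : ℕ) : psi q n m = Nz q n m / Dz q n m := by
  unfold psi Nz Dz
  have : ∀ j : ℕ, q ^ (2*j+n) = q ^ (2*(j:ℤ)+(n:ℤ)) := by
    intro j; rw [← zpow_natCast q (2*j+n)]; norm_cast
  simp only [cc, this]


lemma lin_ne {z : ℂ} (hz : z ≠ 0) (v : ℂ) : cc z * RatFunc.X + cc v ≠ 0 := by
  have h : cc z * RatFunc.X + cc v
      = algebraMap (Polynomial ℂ) (RatFunc ℂ) (Polynomial.C z * Polynomial.X + Polynomial.C v) := by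
    simp [cc, RatFunc.algebraMap_eq_C, map_add, map_mul, RatFunc.algebraMap_C,
      RatFunc.algebraMap_X]
  rw [h]
  apply RatFunc.algebraMap_ne_zero
  intro h0
  have h1 := congrArg (fun p => Polynomial.coeff p 1) h0
  simp [Polynomial.coeff_C] at h1
  exact hz h1

lemma lin_ne' {z : ℂ} (hz : z ≠ 0) (v : ℂ) : cc z * RatFunc.X - cc v ≠ 0 := by
  simpa [sub_eq_add_neg, map_neg] using lin_ne hz (-v)

section NE

variable {q : ℂ} (hq0 : q ≠ 0)

include hq0

lemma Nz_ne (n m : ℕ) : Nz q n m ≠ 0 :=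
  Finset.prod_ne_zero_iff.mpr fun j _ => lin_ne' (zpow_ne_zero _ hq0) _

lemma Dz_ne (n m : ℕ) : Dz q n m ≠ 0 :=
  Finset.prod_ne_zero_iff.mpr fun j _ => lin_ne (zpow_ne_zero _ hq0) _

end NE

lemma Nz_succ (q : ℂ) (n m : ℕ) :
    Nz q n (m+1) = Nz q n m * (cc (q ^ ((n:ℤ)+2*m)) * RatFunc.X - cc Complex.I) := by
  rw [Nz, Finset.prod_range_succ]
  congr 3
  ring

lemma Dz_succ (q : ℂ) (n m : ℕ) :
    Dz q n (m+1) = Dz q n m * (cc (q ^ (-(n:ℤ)-2*m-2)) * RatFunc.X + cc Complex.I) := by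
  rw [Dz, show n + (m+1) = (n+m)+1 from rfl, Finset.prod_range_succ']
  have h1 : (∏ j ∈ Finset.range (n+m),
      (cc (q ^ (2*((j:ℕ)+1:ℕ) - 2*((m+1:ℕ):ℤ) - (n:ℤ))) * RatFunc.X + cc Complex.I))
      = Dz q n m := by
    refine Finset.prod_congr rfl fun j _ => ?_
    congr 3
    push_cast; ring
  have h2 : cc (q ^ (2*((0:ℕ):ℤ) - 2*((m+1:ℕ):ℤ) - (n:ℤ))) * RatFunc.X + cc Complex.I
      = cc (q ^ (-(n:ℤ)-2*m-2)) * RatFunc.X + cc Complex.I := by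
    congr 3
    push_cast; ring
  rw [h1, h2, mul_comm]


section Sigma

variable {q : ℂ} (hq0 : q ≠ 0) (σ : RatFunc ℂ →ₐ[ℂ] RatFunc ℂ)
  (hσ : σ RatFunc.X = algebraMap ℂ (RatFunc ℂ) (q ^ (-2 : ℤ)) * RatFunc.X)

include hq0 hσ

lemma sigma_Nz (n m : ℕ) :
    σ (Nz q n m) = ∏ j ∈ Finset.range m,
      (cc (q ^ (2*(j:ℤ)+(n:ℤ)-2)) * RatFunc.X - cc Complex.I) := by
  rw [Nz, map_prod]
  refine Finset.prod_congr rfl fun j _ => ?_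
  rw [map_sub, map_mul]
  have hc : ∀ z : ℂ, σ (cc z) = cc z := fun z => σ.commutes z
  rw [hc, hc, hσ, ← cc_def, ← mul_assoc, ← map_mul, ← zpow_add₀ hq0]
  congr 3
  try ring

lemma sigma_Dz (n m : ℕ) :
    σ (Dz q n m) = ∏ j ∈ Finset.range (n+m),
      (cc (q ^ (2*(j:ℤ)-2*(m:ℤ)-(n:ℤ)-2)) * RatFunc.X + cc Complex.I) := by
  rw [Dz, map_prod]
  refine Finset.prod_congr rfl fun j _ => ?_
  rw [map_add, map_mul]
  have hc : ∀ z : ℂ, σ (cc z) = cc z := fun z => σ.commutes z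
  rw [hc, hc, hσ, ← cc_def, ← mul_assoc, ← map_mul, ← zpow_add₀ hq0]
  congr 3
  try ring

lemma sigN (n m : ℕ) :
    σ (Nz q n m) * (cc (q ^ ((n:ℤ)+2*m-2)) * RatFunc.X - cc Complex.I)
      = Nz q n m * (cc (q ^ ((n:ℤ)-2)) * RatFunc.X - cc Complex.I) := by
  have h1 : σ (Nz q n m) * (cc (q ^ ((n:ℤ)+2*m-2)) * RatFunc.X - cc Complex.I)
      = ∏ j ∈ Finset.range (m+1),
        (cc (q ^ (2*(j:ℤ)+(n:ℤ)-2)) * RatFunc.X - cc Complex.I) := by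
    rw [Finset.prod_range_succ, sigma_Nz hq0 σ hσ]
    congr 3
    ring
  have h2 : ∏ j ∈ Finset.range (m+1),
        (cc (q ^ (2*(j:ℤ)+(n:ℤ)-2)) * RatFunc.X - cc Complex.I)
      = Nz q n m * (cc (q ^ ((n:ℤ)-2)) * RatFunc.X - cc Complex.I) := by
    rw [Finset.prod_range_succ']
    congr 1
    · rw [Nz]
      refine Finset.prod_congr rfl fun j _ => ?_
      congr 3
      push_cast; ring
    · congr 3
      push_cast; ring
  rw [h1, h2]

lemma sigD (n m : ℕ) :
    σ (Dz q n m) * (cc (q ^ ((n:ℤ)-2)) * RatFunc.X + cc Complex.I)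
      = Dz q n m * (cc (q ^ (-(n:ℤ)-2*m-2)) * RatFunc.X + cc Complex.I) := by
  have h1 : σ (Dz q n m) * (cc (q ^ ((n:ℤ)-2)) * RatFunc.X + cc Complex.I)
      = ∏ j ∈ Finset.range ((n+m)+1),
        (cc (q ^ (2*(j:ℤ)-2*(m:ℤ)-(n:ℤ)-2)) * RatFunc.X + cc Complex.I) := by
    rw [Finset.prod_range_succ, sigma_Dz hq0 σ hσ]
    congr 3
    push_cast; ring
  have h2 : ∏ j ∈ Finset.range ((n+m)+1),
        (cc (q ^ (2*(j:ℤ)-2*(m:ℤ)-(n:ℤ)-2)) * RatFunc.X + cc Complex.I)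
      = Dz q n m * (cc (q ^ (-(n:ℤ)-2*m-2)) * RatFunc.X + cc Complex.I) := by
    rw [Finset.prod_range_succ']
    congr 1
    · rw [Dz]
      refine Finset.prod_congr rfl fun j _ => ?_
      congr 3
      push_cast; ring
    · congr 3
      push_cast; ring
  rw [h1, h2]

end Sigma

noncomputable def AK (q : ℂ) (n m : ℕ) : RatFunc ℂ :=
  (cc (q ^ ((n:ℤ)+2*m)) * RatFunc.X - cc Complex.I)
    * (cc (q ^ ((n:ℤ)+2*m-2)) * RatFunc.X - cc Complex.I)
noncomputable def FK (q : ℂ) (n m : ℕ) : RatFunc ℂ :=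
  (cc (q ^ ((n:ℤ)+2*m-2)) * RatFunc.X - cc Complex.I)
    * (cc (q ^ (-2:ℤ)) * RatFunc.X + cc Complex.I * cc (q ^ ((n:ℤ)+2*m)))
noncomputable def CK (q : ℂ) (n m : ℕ) : RatFunc ℂ :=
  (RatFunc.X + cc Complex.I * cc (q ^ ((n:ℤ)+2*m)))
    * (cc (q ^ (-2:ℤ)) * RatFunc.X + cc Complex.I * cc (q ^ ((n:ℤ)+2*m)))
noncomputable def BK (q : ℂ) (n : ℕ) : RatFunc ℂ :=
  (cc (q ^ ((n:ℤ)-2)) * RatFunc.X - cc Complex.I)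
    * (cc (q ^ ((n:ℤ)-2)) * RatFunc.X + cc Complex.I)

section Rel

variable {q : ℂ} (hq0 : q ≠ 0)

include hq0

lemma br3 (n m : ℕ) :
    cc (q ^ ((n:ℤ)+2*m)) * cc (q ^ (-(n:ℤ)-2*m-2)) = cc (q ^ (-2:ℤ)) := by
  rw [← map_mul, ← zpow_add₀ hq0]
  congr 2
  ring

lemma br5 (n m : ℕ) :
    cc (q ^ ((n:ℤ)+2*((m:ℕ)+1:ℕ))) * cc (q ^ (-(n:ℤ)-2*m-2)) = 1 := by
  rw [← map_mul, ← zpow_add₀ hq0,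
    show ((n:ℤ)+2*((m:ℕ)+1:ℕ)) + (-(n:ℤ)-2*m-2) = 0 by push_cast; ring]
  simp [cc]

lemma rel_succ (n m : ℕ) :
    psi q n (m+1) * FK q n m = cc (q ^ ((n:ℤ)+2*m)) * (psi q n m * AK q n m) := by
  rw [psi_eq_div, psi_eq_div, div_mul_eq_mul_div, div_mul_eq_mul_div, ← mul_div_assoc,
    div_eq_div_iff (Dz_ne hq0 n (m+1)) (Dz_ne hq0 n m), Nz_succ, Dz_succ, FK, AK]
  linear_combination (-(Nz q n m * Dz q n m * (cc (q ^ ((n:ℤ)+2*m)) * RatFunc.X - cc Complex.I)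
    * (cc (q ^ ((n:ℤ)+2*m-2)) * RatFunc.X - cc Complex.I) * RatFunc.X)) * br3 hq0 n m

lemma rel_pred (n m : ℕ) :
    psi q n (m+1) * CK q n (m+1)
      = cc (q ^ ((n:ℤ)+2*((m:ℕ)+1:ℕ))) * (psi q n m * FK q n (m+1)) := by
  rw [psi_eq_div, psi_eq_div, div_mul_eq_mul_div, div_mul_eq_mul_div, ← mul_div_assoc,
    div_eq_div_iff (Dz_ne hq0 n (m+1)) (Dz_ne hq0 n m), Nz_succ, Dz_succ, CK, FK]
  rw [show cc (q ^ ((n:ℤ)+2*((m:ℕ)+1:ℕ)-2)) = cc (q ^ ((n:ℤ)+2*m)) by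
    congr 2; push_cast; ring]
  linear_combination (-(Nz q n m * Dz q n m * (cc (q ^ ((n:ℤ)+2*m)) * RatFunc.X - cc Complex.I)
    * (cc (q ^ (-2:ℤ)) * RatFunc.X + cc Complex.I * cc (q ^ ((n:ℤ)+2*((m:ℕ)+1:ℕ))))
    * RatFunc.X)) * br5 hq0 n m

lemma rel_sigma (σ : RatFunc ℂ →ₐ[ℂ] RatFunc ℂ)
    (hσ : σ RatFunc.X = algebraMap ℂ (RatFunc ℂ) (q ^ (-2 : ℤ)) * RatFunc.X) (n m : ℕ) :
    σ (psi q n m) * FK q n m = cc (q ^ ((n:ℤ)+2*m)) * (psi q n m * BK q n) := by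
  have hσD : σ (Dz q n m) ≠ 0 := by
    rw [map_ne_zero_iff σ (RingHom.injective (σ : RatFunc ℂ →+* RatFunc ℂ))]
    exact Dz_ne hq0 n m
  rw [psi_eq_div, map_div₀, div_mul_eq_mul_div, div_mul_eq_mul_div, ← mul_div_assoc,
    div_eq_div_iff hσD (Dz_ne hq0 n m), FK, BK]
  linear_combination ((cc (q ^ (-2:ℤ)) * RatFunc.X + cc Complex.I * cc (q ^ ((n:ℤ)+2*m)))
      * Dz q n m) * sigN hq0 σ hσ n m
    - (cc (q ^ ((n:ℤ)+2*m)) * Nz q n m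
      * (cc (q ^ ((n:ℤ)-2)) * RatFunc.X - cc Complex.I)) * sigD hq0 σ hσ n m
    - (Nz q n m * Dz q n m * (cc (q ^ ((n:ℤ)-2)) * RatFunc.X - cc Complex.I)
      * RatFunc.X) * br3 hq0 n m

end Rel

lemma helper {q : ℂ} (hq0 : q ≠ 0) (n d : ℕ) (m : ℕ) (hm : m < d)
    (α β γ E : ℂ) (hE : E ≠ 0)
    (hα : m + 1 = d → α = 0) (hγ : m = 0 → γ = 0)
    (g : RatFunc ℂ)
    (hg : cc E * g * FK q n m
      = psi q n m * (cc α * AK q n m + cc β * FK q n m + cc γ * CK q n m)) :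
    g ∈ Submodule.span ℂ (Set.range fun k : Fin d => psi q n (k : ℕ)) := by
  set S := Submodule.span ℂ (Set.range fun k : Fin d => psi q n (k : ℕ)) with hS
  have hmem : ∀ k, k < d → psi q n k ∈ S := fun k hk =>
    Submodule.subset_span ⟨⟨k, hk⟩, rfl⟩
  have hmem' : ∀ (z : ℂ) (k : ℕ), k < d → cc z * psi q n k ∈ S := fun z k hk => by
    rw [cc_def, ← Algebra.smul_def]
    exact S.smul_mem z (hmem k hk)
  have hFne : FK q n m ≠ 0 := by
    rw [FK]
    refine mul_ne_zero (lin_ne' (zpow_ne_zero _ hq0) _) ?_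
    rw [← map_mul]
    exact lin_ne (zpow_ne_zero _ hq0) _
  have haC : (q ^ ((n:ℤ)+2*m)) ≠ 0 := zpow_ne_zero _ hq0
  have h1 : ∃ h ∈ S, cc α * (psi q n m * AK q n m) = h * FK q n m := by
    rcases eq_or_lt_of_le (Nat.succ_le_of_lt hm) with hcase | hcase
    · exact ⟨0, S.zero_mem, by rw [hα hcase]; simp⟩
    · refine ⟨cc (α * (q ^ ((n:ℤ)+2*m))⁻¹) * psi q n (m+1), hmem' _ _ hcase, ?_⟩
      have h := rel_succ hq0 n m
      calc cc α * (psi q n m * AK q n m)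
          = cc (α * (q ^ ((n:ℤ)+2*m))⁻¹) * (cc (q ^ ((n:ℤ)+2*m))
            * (psi q n m * AK q n m)) := by
            rw [← mul_assoc (cc (α * (q ^ ((n:ℤ)+2*m))⁻¹)), ← map_mul,
              show α * (q ^ ((n:ℤ)+2*m))⁻¹ * q ^ ((n:ℤ)+2*m) = α by field_simp]
        _ = cc (α * (q ^ ((n:ℤ)+2*m))⁻¹) * psi q n (m+1) * FK q n m := by
            rw [← h]; ring
  have h3 : ∃ h ∈ S, cc γ * (psi q n m * CK q n m) = h * FK q n m := by
    rcases m with _ | k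
    · exact ⟨0, S.zero_mem, by rw [hγ rfl]; simp⟩
    · refine ⟨cc (γ * q ^ ((n:ℤ)+2*((k:ℕ)+1:ℕ))) * psi q n k, hmem' _ _ (Nat.lt_of_succ_lt hm), ?_⟩
      rw [rel_pred hq0 n k, ← mul_assoc, ← map_mul, ← mul_assoc]
  obtain ⟨h₁, h₁S, h₁eq⟩ := h1
  obtain ⟨h₃, h₃S, h₃eq⟩ := h3
  have hcE : cc E * g = h₁ + cc β * psi q n m + h₃ := by
    apply mul_right_cancel₀ hFne
    rw [show cc E * g * FK q n m = cc E * g * FK q n m from rfl, hg]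
    linear_combination h₁eq + h₃eq
  have hmemE : cc E * g ∈ S := by
    rw [hcE]
    exact S.add_mem (S.add_mem h₁S (by
      rw [cc_def, ← Algebra.smul_def]; exact S.smul_mem _ (hmem m hm))) h₃S
  have : g = E⁻¹ • (cc E * g) := by
    rw [cc_def, ← Algebra.smul_def, smul_smul, inv_mul_cancel₀ hE, one_smul]
  rw [this]
  exact S.smul_mem _ hmemE


theorem auxZ {R : Type*} [CommRing R] (a t u i w : R) :
    a^2*((a^2+1)*(t*a^2+1)*(t+a^2))*((u*t*w-i)*(u*t*w+i))
      = (a^2*t*(u^2*a^2-1)*(t*a^2+1))*((a*w-i)*(a*t*w-i))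
      + (a^3*(1+t)*(1+u^2*t)*(a^2+1))*((a*t*w-i)*(t*w+i*a))
      + (-(t*a^2*(a^2-u^2)*(t+a^2)))*((w+i*a)*(t*w+i*a)) := by ring

theorem auxX {R : Type*} [CommRing R] (a t u i w : R) :
    a*((a^2+1)*(t*a^2+1)*(t+a^2))*w*(u^2*((a*t*w-i)*(t*w+i*a)) - a*((u*t*w-i)*(u*t*w+i)))
      = (i*a^3*(u^2*a^2-1)*(t*a^2+1))*((a*w-i)*(a*t*w-i))
      + (i*a^2*(a^2-1)*(1+t*u^2)*(a^2+1))*((a*t*w-i)*(t*w+i*a))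
      + (i*a*(a^2-u^2)*(t+a^2))*((w+i*a)*(t*w+i*a)) := by ring

theorem auxY {R : Type*} [CommRing R] (a t u i w : R) (hi : i^2 = -1) :
    a*((a^2+1)*(t*a^2+1)*(t+a^2))*((a*t*w-i)*(t*w+i*a) - a*((u*t*w-i)*(u*t*w+i)))
      = w*((i*a*t^2*(1-u^2*a^2)*(t*a^2+1))*((a*w-i)*(a*t*w-i))
      + (i*t*a^2*(a^2-1)*(1+t*u^2)*(a^2+1))*((a*t*w-i)*(t*w+i*a))
      + (i*t^2*a^3*(u^2-a^2)*(t+a^2))*((w+i*a)*(t*w+i*a))) := by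
  linear_combination (- a*t^2*i*w + a^2*t^3*w^2 - a^2*t^3*u^2*w^2 - a^3*t*i*w - a^3*t^3*i*w
    + a^4*t^2*w^2 - a^4*t^2*u^2*w^2 + a^4*t^3*w^2 - a^4*t^3*u^2*w^2 + a^4*t^4*w^2
    - a^4*t^4*u^2*w^2 + a^6*t^2*w^2 - a^6*t^2*u^2*w^2 + a^6*t^3*w^2 - a^6*t^3*u^2*w^2
    + a^6*t^4*w^2 - a^6*t^4*u^2*w^2 + a^7*t*i*w + a^7*t^3*i*w + a^8*t^3*w^2
    - a^8*t^3*u^2*w^2 + a^9*t^2*i*w) * hi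


end St12

/-- For `q = exp(iπP/Q)`, `n ∈ {1,...,Q}`, `d = Q+1−n`, and for the action of
`X`, `Y`, `Z` on the field of rational functions `ℂ(w)` (where `σ : f(w) ↦ f(q⁻²w)` is the
ℂ-algebra endomorphism sending `w` to `q⁻²w`), the ℂ-linear span of `{ψ_0,...,ψ_{d−1}}`
is invariant under `X`, `Y` and `Z`. -/
theorem stmt_12 (Q P : ℕ) (hQodd : Odd Q) (hQpos : 0 < Q)
    (hP1 : 1 ≤ P) (hPQ : P ≤ Q - 1) (hcop : Nat.Coprime P Q)
    (q : ℂ) (hq : q = Complex.exp (↑Real.pi * Complex.I * (P : ℂ) / (Q : ℂ)))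
    (n : ℕ) (hn1 : 1 ≤ n) (hnQ : n ≤ Q) (d : ℕ) (hd : d = Q + 1 - n)
    (σ : RatFunc ℂ →ₐ[ℂ] RatFunc ℂ)
    (hσ : σ RatFunc.X = algebraMap ℂ (RatFunc ℂ) (q ^ (-2 : ℤ)) * RatFunc.X) :
    let Xr : RatFunc ℂ → RatFunc ℂ := fun f =>
      (-Complex.I * q⁻¹ / (q - q⁻¹)) •
        (RatFunc.X * ((q ^ (n : ℤ)) • f - (q ^ (-(n : ℤ))) • σ f))
    let Yr : RatFunc ℂ → RatFunc ℂ := fun f =>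
      (Complex.I * q ^ (-(n : ℤ) + 1) / (q - q⁻¹)) • ((RatFunc.X)⁻¹ * (f - σ f))
    let Zr : RatFunc ℂ → RatFunc ℂ := fun f => (q ^ (-(n : ℤ))) • σ f
    let S : Submodule ℂ (RatFunc ℂ) :=
      Submodule.span ℂ (Set.range fun m : Fin d => psi q n (m : ℕ))
    ∀ f ∈ S, Xr f ∈ S ∧ Yr f ∈ S ∧ Zr f ∈ S := by
  intro Xr Yr Zr S f hf
  have hQC : (Q : ℂ) ≠ 0 := Nat.cast_ne_zero.mpr hQpos.ne'
  have hq0 : q ≠ 0 := by rw [hq]; exact Complex.exp_ne_zero _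
  have hq2Q : q ^ (2*Q) = 1 := by
    rw [hq, ← Complex.exp_nat_mul,
      show ((2*Q : ℕ):ℂ) * (↑Real.pi * Complex.I * (P:ℂ) / (Q:ℂ))
        = ((P:ℤ):ℂ) * (2*(Real.pi:ℂ)*Complex.I) by push_cast; field_simp]
    exact Complex.exp_int_mul_two_pi_mul_I P
  have hpow : ∀ k : ℤ, q ^ (2*k) ≠ -1 := by
    intro k hk
    have h1 : ((q ^ (2*k)) ^ (Q:ℕ)) = 1 := by
      rw [← zpow_natCast (q ^ (2*k)) Q, ← zpow_mul,
        show 2*k*(Q:ℤ) = ((2*Q:ℕ):ℤ)*k by push_cast; ring, zpow_mul, zpow_natCast,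
        hq2Q, one_zpow]
    rw [hk, hQodd.neg_one_pow] at h1
    norm_num at h1
  have hplus : ∀ k : ℤ, q^k*q^k + 1 ≠ 0 := by
    intro k hk
    apply hpow k
    rw [two_mul, zpow_add₀ hq0]
    linear_combination hk
  refine Submodule.span_induction
    (p := fun x _ => Xr x ∈ S ∧ Yr x ∈ S ∧ Zr x ∈ S) ?_ ?_ ?_ ?_ hf
  rintro x ⟨⟨m, hm⟩, rfl⟩
  simp only []
  have haS : (q ^ ((n:ℤ)+2*m)) ≠ 0 := zpow_ne_zero _ hq0
  have htS : (q ^ (-2:ℤ)) ≠ 0 := zpow_ne_zero _ hq0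
  have huS : (q ^ ((n:ℤ))) ≠ 0 := zpow_ne_zero _ hq0
  have hf1 : (q ^ ((n:ℤ)+2*m))^2 + 1 ≠ 0 := by rw [pow_two]; exact hplus _
  have hf2 : (q ^ (-2:ℤ))*(q ^ ((n:ℤ)+2*m))^2 + 1 ≠ 0 := by
    rw [show (q ^ (-2:ℤ))*(q ^ ((n:ℤ)+2*m))^2 = q ^ ((n:ℤ)+2*m-1) * q ^ ((n:ℤ)+2*m-1) by
      simp only [pow_two, ← zpow_add₀ hq0]; congr 1; ring]
    exact hplus _
  have hf3 : (q ^ (-2:ℤ)) + (q ^ ((n:ℤ)+2*m))^2 ≠ 0 := by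
    rw [show (q ^ (-2:ℤ)) + (q ^ ((n:ℤ)+2*m))^2 = (q ^ (-2:ℤ)) * (q ^ ((n:ℤ)+2*m+1) * q ^ ((n:ℤ)+2*m+1) + 1) by
      rw [mul_add, mul_one]
      simp only [pow_two, ← zpow_add₀ hq0]
      rw [add_comm]
      congr 1
      ring]
    exact mul_ne_zero htS (hplus _)
  have hrelσ := St12.rel_sigma hq0 σ hσ n m
  have brA : St12.cc (q ^ ((n:ℤ)+2*m-2)) = (St12.cc (q ^ ((n:ℤ)+2*m))) * (St12.cc (q ^ (-2:ℤ))) := by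
    rw [← map_mul, ← zpow_add₀ hq0]; congr 2; try ring
  have brB : St12.cc (q ^ ((n:ℤ)-2)) = (St12.cc (q ^ ((n:ℤ)))) * (St12.cc (q ^ (-2:ℤ))) := by
    rw [← map_mul, ← zpow_add₀ hq0]; congr 2; try ring
  have brC : (St12.cc (q ^ ((n:ℤ)))) * (St12.cc (q ^ (-(n:ℤ)))) = 1 := by
    rw [← map_mul, ← zpow_add₀ hq0]; simp [St12.cc]
  have hI2 : (St12.cc Complex.I)^2 = -1 := by
    rw [← map_pow, Complex.I_sq, map_neg, map_one]
  have hub : m + 1 = d → (q ^ ((n:ℤ)))^2*(q ^ ((n:ℤ)+2*m))^2 = 1 := by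
    intro h
    have hmn : m + n = Q := by omega
    rw [show (q ^ ((n:ℤ)))^2*(q ^ ((n:ℤ)+2*m))^2 = q ^ ((4*Q:ℕ):ℤ) by
      simp only [pow_two, ← zpow_add₀ hq0]
      congr 1
      rw [show ((4*Q:ℕ):ℤ) = 4*((Q:ℕ):ℤ) by push_cast; ring,
        show ((Q:ℕ):ℤ) = (m:ℤ)+(n:ℤ) by exact_mod_cast hmn.symm]
      ring]
    rw [zpow_natCast, show 4*Q = 2*Q*2 by ring, pow_mul, hq2Q, one_pow]
  refine ⟨?_, ?_, ?_⟩
  · -- X operator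
    have hgX : St12.cc ((q ^ ((n:ℤ))) * (q ^ ((n:ℤ)+2*m)) * ((q ^ ((n:ℤ)+2*m))^2+1) * (q ^ (-2:ℤ)*(q ^ ((n:ℤ)+2*m))^2+1) * (q ^ (-2:ℤ)+(q ^ ((n:ℤ)+2*m))^2)) * (RatFunc.X * ((q ^ (n:ℤ)) • (psi q n m) - (q ^ (-(n:ℤ))) • (σ (psi q n m)))) * (St12.FK q n m)
        = (psi q n m) * (St12.cc (Complex.I*(q ^ ((n:ℤ)+2*m))^3*((q ^ ((n:ℤ)))^2*(q ^ ((n:ℤ)+2*m))^2-1)*((q ^ (-2:ℤ))*(q ^ ((n:ℤ)+2*m))^2+1)) * (St12.AK q n m) + St12.cc (Complex.I*(q ^ ((n:ℤ)+2*m))^2*((q ^ ((n:ℤ)+2*m))^2-1)*(1+(q ^ (-2:ℤ))*(q ^ ((n:ℤ)))^2)*((q ^ ((n:ℤ)+2*m))^2+1)) * (St12.FK q n m) + St12.cc (Complex.I*(q ^ ((n:ℤ)+2*m))*((q ^ ((n:ℤ)+2*m))^2-(q ^ ((n:ℤ)))^2)*((q ^ (-2:ℤ))+(q ^ ((n:ℤ)+2*m))^2))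 * (St12.CK q n m)) := by
      have h1 : (RatFunc.X * ((q ^ (n:ℤ)) • (psi q n m) - (q ^ (-(n:ℤ))) • (σ (psi q n m)))) * (St12.FK q n m)
          = RatFunc.X * ((St12.cc (q ^ ((n:ℤ)))) * ((psi q n m) * (St12.FK q n m))
            - (St12.cc (q ^ (-(n:ℤ)))) * ((σ (psi q n m)) * (St12.FK q n m))) := by
        simp only [Algebra.smul_def, ← St12.cc_def]; ring
      rw [mul_assoc, h1, hrelσ, St12.AK, St12.FK, St12.CK, St12.BK, brA, brB]
      simp only [map_mul, map_add, map_pow, map_sub, map_neg, map_one]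
      linear_combination (psi q n m) * St12.auxX (St12.cc (q ^ ((n:ℤ)+2*m))) (St12.cc (q ^ (-2:ℤ))) (St12.cc (q ^ ((n:ℤ)))) (St12.cc Complex.I) RatFunc.X
        + (-(psi q n m * (St12.cc (q ^ ((n:ℤ)+2*m)))^2 * ((St12.cc (q ^ ((n:ℤ)+2*m)))^2+1) * ((St12.cc (q ^ (-2:ℤ)))*(St12.cc (q ^ ((n:ℤ)+2*m)))^2+1) * ((St12.cc (q ^ (-2:ℤ)))+(St12.cc (q ^ ((n:ℤ)+2*m)))^2) * (((St12.cc (q ^ ((n:ℤ))))*(St12.cc (q ^ (-2:ℤ)))*RatFunc.X - St12.cc Complex.I) * ((St12.cc (q ^ ((n:ℤ))))*(St12.cc (q ^ (-2:ℤ)))*RatFunc.X + St12.cc Complex.I)) * RatFunc.X)) * brC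
    exact S.smul_mem _ (St12.helper hq0 n d m hm
      (Complex.I*(q ^ ((n:ℤ)+2*m))^3*((q ^ ((n:ℤ)))^2*(q ^ ((n:ℤ)+2*m))^2-1)*((q ^ (-2:ℤ))*(q ^ ((n:ℤ)+2*m))^2+1)) (Complex.I*(q ^ ((n:ℤ)+2*m))^2*((q ^ ((n:ℤ)+2*m))^2-1)*(1+(q ^ (-2:ℤ))*(q ^ ((n:ℤ)))^2)*((q ^ ((n:ℤ)+2*m))^2+1)) (Complex.I*(q ^ ((n:ℤ)+2*m))*((q ^ ((n:ℤ)+2*m))^2-(q ^ ((n:ℤ)))^2)*((q ^ (-2:ℤ))+(q ^ ((n:ℤ)+2*m))^2)) ((q ^ ((n:ℤ))) * (q ^ ((n:ℤ)+2*m)) * ((q ^ ((n:ℤ)+2*m))^2+1) * (q ^ (-2:ℤ)*(q ^ ((n:ℤ)+2*m))^2+1) * (q ^ (-2:ℤ)+(q ^ ((n:ℤ)+2*m))^2)) (mul_ne_zero (mul_ne_zero (mul_ne_zero (mul_ne_zero huS haS) hf1) hf2) hf3)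
      (fun h => by rw [hub h]; ring)
      (fun h => by subst h; simp only [Nat.cast_zero, mul_zero, add_zero]; ring)
      (RatFunc.X * ((q ^ (n:ℤ)) • (psi q n m) - (q ^ (-(n:ℤ))) • (σ (psi q n m)))) hgX)
  · -- Y operator
    have hgY : St12.cc ((q ^ ((n:ℤ)+2*m)) * ((q ^ ((n:ℤ)+2*m))^2+1) * (q ^ (-2:ℤ)*(q ^ ((n:ℤ)+2*m))^2+1) * (q ^ (-2:ℤ)+(q ^ ((n:ℤ)+2*m))^2)) * ((RatFunc.X)⁻¹ * ((psi q n m) - (σ (psi q n m)))) * (St12.FK q n m)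
        = (psi q n m) * (St12.cc (Complex.I*(q ^ ((n:ℤ)+2*m))*(q ^ (-2:ℤ))^2*(1-(q ^ ((n:ℤ)))^2*(q ^ ((n:ℤ)+2*m))^2)*((q ^ (-2:ℤ))*(q ^ ((n:ℤ)+2*m))^2+1)) * (St12.AK q n m) + St12.cc (Complex.I*(q ^ (-2:ℤ))*(q ^ ((n:ℤ)+2*m))^2*((q ^ ((n:ℤ)+2*m))^2-1)*(1+(q ^ (-2:ℤ))*(q ^ ((n:ℤ)))^2)*((q ^ ((n:ℤ)+2*m))^2+1)) * (St12.FK q n m) + St12.cc (Complex.I*(q ^ (-2:ℤ))^2*(q ^ ((n:ℤ)+2*m))^3*((q ^ ((n:ℤ)))^2-(q ^ ((n:ℤ)+2*m))^2)*((q ^ (-2:ℤ))+(q ^ ((n:ℤ)+2*m))^2)) * (St12.CK q n m)) := by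
      calc St12.cc ((q ^ ((n:ℤ)+2*m)) * ((q ^ ((n:ℤ)+2*m))^2+1) * (q ^ (-2:ℤ)*(q ^ ((n:ℤ)+2*m))^2+1) * (q ^ (-2:ℤ)+(q ^ ((n:ℤ)+2*m))^2)) * ((RatFunc.X)⁻¹ * ((psi q n m) - (σ (psi q n m)))) * (St12.FK q n m)
          = (RatFunc.X)⁻¹ * (St12.cc ((q ^ ((n:ℤ)+2*m)) * ((q ^ ((n:ℤ)+2*m))^2+1) * (q ^ (-2:ℤ)*(q ^ ((n:ℤ)+2*m))^2+1) * (q ^ (-2:ℤ)+(q ^ ((n:ℤ)+2*m))^2)) * ((psi q n m) * (St12.FK q n m) - (σ (psi q n m)) * (St12.FK q n m))) := by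
            ring
        _ = (RatFunc.X)⁻¹ * (St12.cc ((q ^ ((n:ℤ)+2*m)) * ((q ^ ((n:ℤ)+2*m))^2+1) * (q ^ (-2:ℤ)*(q ^ ((n:ℤ)+2*m))^2+1) * (q ^ (-2:ℤ)+(q ^ ((n:ℤ)+2*m))^2)) * ((psi q n m) * (St12.FK q n m)
            - (St12.cc (q ^ ((n:ℤ)+2*m))) * ((psi q n m) * (St12.BK q n)))) := by rw [hrelσ]
        _ = (RatFunc.X)⁻¹ * (RatFunc.X * ((psi q n m) * (St12.cc (Complex.I*(q ^ ((n:ℤ)+2*m))*(q ^ (-2:ℤ))^2*(1-(q ^ ((n:ℤ)))^2*(q ^ ((n:ℤ)+2*m))^2)*((q ^ (-2:ℤ))*(q ^ ((n:ℤ)+2*m))^2+1)) * (St12.AK q n m)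
            + St12.cc (Complex.I*(q ^ (-2:ℤ))*(q ^ ((n:ℤ)+2*m))^2*((q ^ ((n:ℤ)+2*m))^2-1)*(1+(q ^ (-2:ℤ))*(q ^ ((n:ℤ)))^2)*((q ^ ((n:ℤ)+2*m))^2+1)) * (St12.FK q n m) + St12.cc (Complex.I*(q ^ (-2:ℤ))^2*(q ^ ((n:ℤ)+2*m))^3*((q ^ ((n:ℤ)))^2-(q ^ ((n:ℤ)+2*m))^2)*((q ^ (-2:ℤ))+(q ^ ((n:ℤ)+2*m))^2)) * (St12.CK q n m)))) := by
            rw [St12.AK, St12.FK, St12.CK, St12.BK, brA, brB]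
            simp only [map_mul, map_add, map_pow, map_sub, map_neg, map_one]
            linear_combination (RatFunc.X)⁻¹ * (psi q n m)
              * St12.auxY (St12.cc (q ^ ((n:ℤ)+2*m))) (St12.cc (q ^ (-2:ℤ))) (St12.cc (q ^ ((n:ℤ)))) (St12.cc Complex.I) RatFunc.X hI2
        _ = (psi q n m) * (St12.cc (Complex.I*(q ^ ((n:ℤ)+2*m))*(q ^ (-2:ℤ))^2*(1-(q ^ ((n:ℤ)))^2*(q ^ ((n:ℤ)+2*m))^2)*((q ^ (-2:ℤ))*(q ^ ((n:ℤ)+2*m))^2+1)) * (St12.AK q n m) + St12.cc (Complex.I*(q ^ (-2:ℤ))*(q ^ ((n:ℤ)+2*m))^2*((q ^ ((n:ℤ)+2*m))^2-1)*(1+(q ^ (-2:ℤ))*(q ^ ((n:ℤ)))^2)*((q ^ ((n:ℤ)+2*m))^2+1)) * (St12.FK q n m)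
            + St12.cc (Complex.I*(q ^ (-2:ℤ))^2*(q ^ ((n:ℤ)+2*m))^3*((q ^ ((n:ℤ)))^2-(q ^ ((n:ℤ)+2*m))^2)*((q ^ (-2:ℤ))+(q ^ ((n:ℤ)+2*m))^2)) * (St12.CK q n m)) := by
            rw [← mul_assoc, inv_mul_cancel₀ RatFunc.X_ne_zero, one_mul]
    exact S.smul_mem _ (St12.helper hq0 n d m hm
      (Complex.I*(q ^ ((n:ℤ)+2*m))*(q ^ (-2:ℤ))^2*(1-(q ^ ((n:ℤ)))^2*(q ^ ((n:ℤ)+2*m))^2)*((q ^ (-2:ℤ))*(q ^ ((n:ℤ)+2*m))^2+1)) (Complex.I*(q ^ (-2:ℤ))*(q ^ ((n:ℤ)+2*m))^2*((q ^ ((n:ℤ)+2*m))^2-1)*(1+(q ^ (-2:ℤ))*(q ^ ((n:ℤ)))^2)*((q ^ ((n:ℤ)+2*m))^2+1)) (Complex.I*(q ^ (-2:ℤ))^2*(q ^ ((n:ℤ)+2*m))^3*((q ^ ((n:ℤ)))^2-(q ^ ((n:ℤ)+2*m))^2)*((q ^ (-2:ℤ))+(q ^ ((n:ℤ)+2*m))^2))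 ((q ^ ((n:ℤ)+2*m)) * ((q ^ ((n:ℤ)+2*m))^2+1) * (q ^ (-2:ℤ)*(q ^ ((n:ℤ)+2*m))^2+1) * (q ^ (-2:ℤ)+(q ^ ((n:ℤ)+2*m))^2)) (mul_ne_zero (mul_ne_zero (mul_ne_zero haS hf1) hf2) hf3)
      (fun h => by rw [hub h]; ring)
      (fun h => by subst h; simp only [Nat.cast_zero, mul_zero, add_zero]; ring)
      ((RatFunc.X)⁻¹ * ((psi q n m) - (σ (psi q n m)))) hgY)
  · -- Z operator
    have hgZ : St12.cc ((q ^ ((n:ℤ)+2*m)) * ((q ^ ((n:ℤ)+2*m))^2+1) * (q ^ (-2:ℤ)*(q ^ ((n:ℤ)+2*m))^2+1) * (q ^ (-2:ℤ)+(q ^ ((n:ℤ)+2*m))^2)) * (σ (psi q n m)) * (St12.FK q n m)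
        = (psi q n m) * (St12.cc ((q ^ ((n:ℤ)+2*m))^2*(q ^ (-2:ℤ))*((q ^ ((n:ℤ)))^2*(q ^ ((n:ℤ)+2*m))^2-1)*((q ^ (-2:ℤ))*(q ^ ((n:ℤ)+2*m))^2+1)) * (St12.AK q n m) + St12.cc ((q ^ ((n:ℤ)+2*m))^3*(1+(q ^ (-2:ℤ)))*(1+(q ^ ((n:ℤ)))^2*(q ^ (-2:ℤ)))*((q ^ ((n:ℤ)+2*m))^2+1)) * (St12.FK q n m) + St12.cc (-((q ^ (-2:ℤ))*(q ^ ((n:ℤ)+2*m))^2*((q ^ ((n:ℤ)+2*m))^2-(q ^ ((n:ℤ)))^2)*((q ^ (-2:ℤ))+(q ^ ((n:ℤ)+2*m))^2))) * (St12.CK q n m)) := by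
      rw [mul_assoc, hrelσ, St12.AK, St12.FK, St12.CK, St12.BK, brA, brB]
      simp only [map_mul, map_add, map_pow, map_sub, map_neg, map_one]
      linear_combination (psi q n m) * St12.auxZ (St12.cc (q ^ ((n:ℤ)+2*m))) (St12.cc (q ^ (-2:ℤ))) (St12.cc (q ^ ((n:ℤ)))) (St12.cc Complex.I) RatFunc.X
    exact S.smul_mem _ (St12.helper hq0 n d m hm
      ((q ^ ((n:ℤ)+2*m))^2*(q ^ (-2:ℤ))*((q ^ ((n:ℤ)))^2*(q ^ ((n:ℤ)+2*m))^2-1)*((q ^ (-2:ℤ))*(q ^ ((n:ℤ)+2*m))^2+1)) ((q ^ ((n:ℤ)+2*m))^3*(1+(q ^ (-2:ℤ)))*(1+(q ^ ((n:ℤ)))^2*(q ^ (-2:ℤ)))*((q ^ ((n:ℤ)+2*m))^2+1)) (-((q ^ (-2:ℤ))*(q ^ ((n:ℤ)+2*m))^2*((q ^ ((n:ℤ)+2*m))^2-(q ^ ((n:ℤ)))^2)*((q ^ (-2:ℤ))+(q ^ ((n:ℤ)+2*m))^2))) ((q ^ ((n:ℤ)+2*m)) * ((q ^ ((n:ℤ)+2*m))^2+1)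 * (q ^ (-2:ℤ)*(q ^ ((n:ℤ)+2*m))^2+1) * (q ^ (-2:ℤ)+(q ^ ((n:ℤ)+2*m))^2)) (mul_ne_zero (mul_ne_zero (mul_ne_zero haS hf1) hf2) hf3)
      (fun h => by rw [hub h]; ring)
      (fun h => by subst h; simp only [Nat.cast_zero, mul_zero, add_zero]; ring)
      (σ (psi q n m)) hgZ)
  · -- zero
    refine ⟨?_, ?_, ?_⟩ <;> simp [Xr, Yr, Zr]
  · -- add
    rintro x y hx hy ⟨hx1, hx2, hx3⟩ ⟨hy1, hy2, hy3⟩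
    have eX : Xr (x + y) = Xr x + Xr y := by
      simp only [Xr, Algebra.smul_def, map_add]; ring
    have eY : Yr (x + y) = Yr x + Yr y := by
      simp only [Yr, Algebra.smul_def, map_add]; ring
    have eZ : Zr (x + y) = Zr x + Zr y := by
      simp only [Zr, Algebra.smul_def, map_add]; ring
    exact ⟨eX ▸ S.add_mem hx1 hy1, eY ▸ S.add_mem hx2 hy2, eZ ▸ S.add_mem hx3 hy3⟩
  · -- smul
    rintro r x hx ⟨hx1, hx2, hx3⟩
    have eX : Xr (r • x) = r • Xr x := by
      simp only [Xr, Algebra.smul_def, map_mul, AlgHom.commutes]; ring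
    have eY : Yr (r • x) = r • Yr x := by
      simp only [Yr, Algebra.smul_def, map_mul, AlgHom.commutes]; ring
    have eZ : Zr (r • x) = r • Zr x := by
      simp only [Zr, Algebra.smul_def, map_mul, AlgHom.commutes]; ring
    exact ⟨eX ▸ S.smul_mem r hx1, eY ▸ S.smul_mem r hx2, eZ ▸ S.smul_mem r hx3⟩
end

section
/- Let Q be an odd positive integer, P ∈ {1,...,Q−1} with gcd(P,Q) = 1, q = exp(iπP/Q), and let n ∈ ℤ. Define c_m = (q^{n−1} + q^{−n+1}) / ((q^{2m+n−1} + q^{−2m−n+1})(q^{2m+n+1} + q^{−2m−n−1})) for integers m ≥ 0. Then for every integer m ≥ 1: (q^{2m+n+3} + q^{−2m−n−3}) c_{m+1} − (q + q⁻¹)(q^{2m+n} + q^{−2m−n}) c_m + (q^{2m+n−3} + q^{−2m−n+3}) c_{m−1} = 0. -/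
lemma aux_ne (Q P : ℕ) (hQodd : Odd Q) (hQpos : 0 < Q)
    (q : ℂ) (hq : q = Complex.exp (↑Real.pi * Complex.I * (P : ℂ) / (Q : ℂ)))
    (k : ℤ) : q ^ k + q ^ (-k) ≠ 0 := by
  have hq0 : q ≠ 0 := by rw [hq]; exact Complex.exp_ne_zero _
  intro h
  have h2 : q ^ (2 * k) = -1 := by
    have := congrArg (· * q ^ k) h
    simp only [add_mul, zero_mul, ← zpow_add₀ hq0] at this
    simp only [neg_add_cancel, zpow_zero] at this
    have h3 : q ^ (k + k) = -1 := by linear_combination this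
    rw [two_mul]; exact h3
  have hQ0 : (Q : ℂ) ≠ 0 := Nat.cast_ne_zero.mpr hQpos.ne'
  have hexp : Complex.exp ((2 * k : ℤ) * (↑Real.pi * Complex.I * (P : ℂ) / (Q : ℂ)))
      = Complex.exp (↑Real.pi * Complex.I) := by
    rw [Complex.exp_int_mul, ← hq, Complex.exp_pi_mul_I, h2]
  rw [Complex.exp_eq_exp_iff_exists_int] at hexp
  obtain ⟨j, hj⟩ := hexp
  have hpi : (Real.pi : ℂ) ≠ 0 := by simpa using Real.pi_ne_zero
  have hI : Complex.I ≠ 0 := Complex.I_ne_zero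
  have key : (2 * k * P : ℂ) = (Q : ℂ) * (2 * j + 1) := by
    have hPI : (Real.pi : ℂ) * Complex.I ≠ 0 := mul_ne_zero hpi hI
    field_simp at hj
    exact mul_left_cancel₀ hPI (show (Real.pi:ℂ) * Complex.I * (2 * k * P)
      = (Real.pi:ℂ) * Complex.I * ((Q:ℂ) * (2 * j + 1)) by push_cast at hj; linear_combination (Real.pi:ℂ) * Complex.I * hj)
  have keyZ : 2 * k * (P:ℤ) = (Q:ℤ) * (2 * j + 1) := by exact_mod_cast key
  have hodd : Odd ((Q:ℤ) * (2 * j + 1)) :=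
    (Int.odd_coe_nat Q).mpr hQodd |>.mul ⟨j, by ring⟩
  rw [← keyZ] at hodd
  exact ((Int.not_odd_iff_even.mpr ⟨k * P, by ring⟩)) hodd

lemma frac (A u1 um1 u0 u3 um3 Qc : ℂ) (h1 : u1 ≠ 0) (hm1 : um1 ≠ 0)
    (h3 : u3 ≠ 0) (hm3 : um3 ≠ 0) (key : um1 + u1 = Qc * u0) :
    u3 * (A / (u1 * u3)) - Qc * u0 * (A / (um1 * u1)) + um3 * (A / (um3 * um1)) = 0 := by
  field_simp
  linear_combination A * key

lemma main_alg (q : ℂ) (hq0 : q ≠ 0)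
    (hne : ∀ a b : ℤ, a + b = 0 → q ^ a + q ^ b ≠ 0) (n s : ℤ) :
    (q ^ (s+3) + q ^ (-s-3)) *
        ((q ^ (n-1) + q ^ (-n+1)) / ((q ^ (s+1) + q ^ (-s-1)) * (q ^ (s+3) + q ^ (-s-3))))
      - (q + q⁻¹) * (q ^ s + q ^ (-s)) *
        ((q ^ (n-1) + q ^ (-n+1)) / ((q ^ (s-1) + q ^ (-s+1)) * (q ^ (s+1) + q ^ (-s-1))))
      + (q ^ (s-3) + q ^ (-s+3)) *
        ((q ^ (n-1) + q ^ (-n+1)) / ((q ^ (s-3) + q ^ (-s+3)) * (q ^ (s-1) + q ^ (-s+1)))) = 0 := by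
  have h1 : q ^ (s+1) + q ^ (-s-1) ≠ 0 := hne _ _ (by ring)
  have hm1 : q ^ (s-1) + q ^ (-s+1) ≠ 0 := hne _ _ (by ring)
  have h3 : q ^ (s+3) + q ^ (-s-3) ≠ 0 := hne _ _ (by ring)
  have hm3 : q ^ (s-3) + q ^ (-s+3) ≠ 0 := hne _ _ (by ring)
  have key : (q ^ (s-1) + q ^ (-s+1)) + (q ^ (s+1) + q ^ (-s-1))
      = (q + q⁻¹) * (q ^ s + q ^ (-s)) := by
    rw [zpow_sub_one₀ hq0 s, zpow_add_one₀ hq0 (-s), zpow_add_one₀ hq0 s,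
      zpow_sub_one₀ hq0 (-s)]
    ring
  exact frac _ _ _ _ _ _ _ h1 hm1 h3 hm3 key

/-- For `q = exp(iπP/Q)` and `n ∈ ℤ`, the coefficients
`c_m = (q^{n−1}+q^{−n+1})/((q^{2m+n−1}+q^{−2m−n+1})(q^{2m+n+1}+q^{−2m−n−1}))` satisfy, for
every `m ≥ 1`, the three-term recursion
`(q^{2m+n+3}+q^{−2m−n−3}) c_{m+1} − (q+q⁻¹)(q^{2m+n}+q^{−2m−n}) c_m
  + (q^{2m+n−3}+q^{−2m−n+3}) c_{m−1} = 0`. -/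
theorem stmt_13 (Q P : ℕ) (hQodd : Odd Q) (hQpos : 0 < Q)
    (hP1 : 1 ≤ P) (hPQ : P ≤ Q - 1) (hcop : Nat.Coprime P Q)
    (q : ℂ) (hq : q = Complex.exp (↑Real.pi * Complex.I * (P : ℂ) / (Q : ℂ)))
    (n : ℤ) :
    let c : ℕ → ℂ := fun m =>
      (q ^ (n - 1) + q ^ (-n + 1)) /
        ((q ^ (2 * (m : ℤ) + n - 1) + q ^ (-(2 * (m : ℤ)) - n + 1)) *
          (q ^ (2 * (m : ℤ) + n + 1) + q ^ (-(2 * (m : ℤ)) - n - 1)))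
    ∀ m : ℕ, 1 ≤ m →
      (q ^ (2 * (m : ℤ) + n + 3) + q ^ (-(2 * (m : ℤ)) - n - 3)) * c (m + 1)
        - (q + q⁻¹) * (q ^ (2 * (m : ℤ) + n) + q ^ (-(2 * (m : ℤ)) - n)) * c m
        + (q ^ (2 * (m : ℤ) + n - 3) + q ^ (-(2 * (m : ℤ)) - n + 3)) * c (m - 1) = 0 := by
  intro c m hm
  have hq0 : q ≠ 0 := by rw [hq]; exact Complex.exp_ne_zero _
  have hne : ∀ a b : ℤ, a + b = 0 → q ^ a + q ^ b ≠ 0 := by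
    intro a b hab
    have : b = -a := by omega
    rw [this]; exact aux_ne Q P hQodd hQpos q hq a
  obtain ⟨k, rfl⟩ : ∃ k, m = k + 1 := ⟨m - 1, by omega⟩
  simp only [c, Nat.add_sub_cancel]
  set s : ℤ := 2 * ((k:ℤ) + 1) + n with hs
  have e1 : (2 * ((k+1 : ℕ) : ℤ) + n + 3) = s + 3 := by push_cast [hs]; ring
  have e2 : (-(2 * ((k+1 : ℕ) : ℤ)) - n - 3) = -s - 3 := by push_cast [hs]; ring
  have e3 : (2 * ((k+1 : ℕ) : ℤ) + n) = s := by push_cast [hs]; ring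
  have e4 : (-(2 * ((k+1 : ℕ) : ℤ)) - n) = -s := by push_cast [hs]; ring
  have e5 : (2 * ((k+1 : ℕ) : ℤ) + n - 3) = s - 3 := by push_cast [hs]; ring
  have e6 : (-(2 * ((k+1 : ℕ) : ℤ)) - n + 3) = -s + 3 := by push_cast [hs]; ring
  have e7 : (2 * ((k+1+1 : ℕ) : ℤ) + n - 1) = s + 1 := by push_cast [hs]; ring
  have e8 : (-(2 * ((k+1+1 : ℕ) : ℤ)) - n + 1) = -s - 1 := by push_cast [hs]; ring
  have e9 : (2 * ((k+1+1 : ℕ) : ℤ) + n + 1) = s + 3 := by push_cast [hs]; ring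
  have e10 : (-(2 * ((k+1+1 : ℕ) : ℤ)) - n - 1) = -s - 3 := by push_cast [hs]; ring
  have e11 : (2 * ((k+1 : ℕ) : ℤ) + n - 1) = s - 1 := by push_cast [hs]; ring
  have e12 : (-(2 * ((k+1 : ℕ) : ℤ)) - n + 1) = -s + 1 := by push_cast [hs]; ring
  have e13 : (2 * ((k+1 : ℕ) : ℤ) + n + 1) = s + 1 := by push_cast [hs]; ring
  have e14 : (-(2 * ((k+1 : ℕ) : ℤ)) - n - 1) = -s - 1 := by push_cast [hs]; ring
  have e15 : (2 * ((k : ℕ) : ℤ) + n - 1) = s - 3 := by push_cast [hs]; ring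
  have e16 : (-(2 * ((k : ℕ) : ℤ)) - n + 1) = -s + 3 := by push_cast [hs]; ring
  have e17 : (2 * ((k : ℕ) : ℤ) + n + 1) = s - 1 := by push_cast [hs]; ring
  have e18 : (-(2 * ((k : ℕ) : ℤ)) - n - 1) = -s + 1 := by push_cast [hs]; ring
  rw [e1, e2, e5, e6, e7, e8, e9, e10, e11, e12, e13, e14, e15, e16, e17, e18, e3, e4]
  exact main_alg q hq0 hne n s
end

section
/- Let Q be an odd positive integer, P ∈ {1,...,Q−1} with gcd(P,Q) = 1, q = exp(iπP/Q), and let n ∈ ℤ. Define c_m = (q^{n−1} + q^{−n+1}) / ((q^{2m+n−1} + q^{−2m−n+1})(q^{2m+n+1} + q^{−2m−n−1})) and d_m = (q^{n−1} + q^{−n+1}) [2m+n]_q / ((q^{2m+n−1} + q^{−2m−n+1})(q^{2m+n+1} + q^{−2m−n−1})) for integers m ≥ 0. Then for every integer m ≥ 1: d_m = −((q^{2m+n−1} + q^{−2m−n+1}) c_m − (q^{2m+n−3} + q^{−2m−n+3}) c_{m−1}) / (q − q⁻¹)². -/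
lemma stmt14_keyQ (Q P : ℕ) (hQpos : 0 < Q) (hcop : Nat.Coprime P Q)
    (q : ℂ) (hq : q = Complex.exp (↑Real.pi * Complex.I * (P : ℂ) / (Q : ℂ))) :
    ∀ a : ℤ, q ^ (2 * a) = 1 ↔ (Q : ℤ) ∣ a := by
  have hQ0 : (Q : ℂ) ≠ 0 := Nat.cast_ne_zero.mpr hQpos.ne'
  have hpi : (Real.pi : ℂ) ≠ 0 := Complex.ofReal_ne_zero.mpr Real.pi_ne_zero
  have hI : Complex.I ≠ 0 := Complex.I_ne_zero
  have hpow : ∀ a : ℤ, q ^ a = Complex.exp ((a : ℂ) * (↑Real.pi * Complex.I * (P : ℂ) / (Q : ℂ))) := by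
    intro a; rw [hq, Complex.exp_int_mul]
  intro a
  constructor
  · intro h
    rw [hpow, Complex.exp_eq_one_iff] at h
    obtain ⟨k, hk⟩ := h
    have hc : ((a * P : ℤ) : ℂ) = ((k * Q : ℤ) : ℂ) := by
      push_cast at hk ⊢
      field_simp at hk
      have h2 : (2 * (Real.pi:ℂ) * Complex.I) * ((a:ℂ) * P) = (2 * (Real.pi:ℂ) * Complex.I) * ((k:ℂ) * Q) := by
        linear_combination (2 * (Real.pi:ℂ) * Complex.I) * hk
      have h3 := mul_left_cancel₀ (by simp [hpi, hI] : (2 * (Real.pi:ℂ) * Complex.I) ≠ 0) h2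
      linear_combination h3
    have hz : a * (P : ℤ) = k * Q := by exact_mod_cast hc
    have hcop' : IsCoprime ((Q : ℤ)) ((P : ℤ)) := by
      rw [Int.isCoprime_iff_gcd_eq_one, Int.gcd_natCast_natCast]
      exact hcop.symm
    exact hcop'.dvd_of_dvd_mul_right ⟨k, by linear_combination hz⟩
  · rintro ⟨b, rfl⟩
    rw [hpow]
    have : ((2 * ((Q : ℤ) * b) : ℤ) : ℂ) * (↑Real.pi * Complex.I * (P : ℂ) / (Q : ℂ))
        = ((b * P : ℤ) : ℂ) * (2 * ↑Real.pi * Complex.I) := by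
      push_cast; field_simp
    rw [this, Complex.exp_int_mul_two_pi_mul_I]

lemma stmt14_aux2 (A B X d K : ℂ) (hA : A ≠ 0) (hB : B ≠ 0) (hd : d ≠ 0)
    (rel : A - B = -(d * X)) :
    K * (X / d) / (A * B) = -(K / B - K / A) / d ^ 2 := by
  rw [div_sub_div _ _ hB hA, mul_div_assoc', div_div, ← neg_div, div_div,
    div_eq_div_iff (mul_ne_zero hd (mul_ne_zero hA hB))
      (mul_ne_zero (mul_ne_zero hB hA) (pow_ne_zero 2 hd))]
  linear_combination (K * d * (A * B)) * rel

lemma stmt14_aux_alg (q t K : ℂ) (hq : q ≠ 0) (ht : t ≠ 0) (hd : q - q⁻¹ ≠ 0)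
    (hA : t * q + (t * q)⁻¹ ≠ 0) (hB : t * q ^ 3 + (t * q ^ 3)⁻¹ ≠ 0)
    (hC : t * q⁻¹ + (t * q⁻¹)⁻¹ ≠ 0) :
    K * ((t * q ^ 2 - (t * q ^ 2)⁻¹) / (q - q⁻¹)) /
        ((t * q + (t * q)⁻¹) * (t * q ^ 3 + (t * q ^ 3)⁻¹))
      = -((t * q + (t * q)⁻¹) * (K / ((t * q + (t * q)⁻¹) * (t * q ^ 3 + (t * q ^ 3)⁻¹)))
          - (t * q⁻¹ + (t * q⁻¹)⁻¹) * (K / ((t * q⁻¹ + (t * q⁻¹)⁻¹) * (t * q + (t * q)⁻¹))))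
        / (q - q⁻¹) ^ 2 := by
  have e1 : (t * q + (t * q)⁻¹) * (K / ((t * q + (t * q)⁻¹) * (t * q ^ 3 + (t * q ^ 3)⁻¹)))
      = K / (t * q ^ 3 + (t * q ^ 3)⁻¹) := by
    rw [div_mul_eq_div_div, mul_div_assoc', mul_div_assoc', mul_div_cancel_left₀ _ hA]
  have e2 : (t * q⁻¹ + (t * q⁻¹)⁻¹) * (K / ((t * q⁻¹ + (t * q⁻¹)⁻¹) * (t * q + (t * q)⁻¹)))
      = K / (t * q + (t * q)⁻¹) := by
    rw [div_mul_eq_div_div, mul_div_assoc', mul_div_assoc', mul_div_cancel_left₀ _ hC]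
  rw [e1, e2]
  refine stmt14_aux2 _ _ _ _ _ hA hB hd ?_
  field_simp
  ring

/-- For `q = exp(iπP/Q)` and `n ∈ ℤ`, with
`c_m = (q^{n−1}+q^{−n+1})/((q^{2m+n−1}+q^{−2m−n+1})(q^{2m+n+1}+q^{−2m−n−1}))` and
`d_m = [2m+n]_q c_m`, one has, for every `m ≥ 1`,
`d_m = −((q^{2m+n−1}+q^{−2m−n+1}) c_m − (q^{2m+n−3}+q^{−2m−n+3}) c_{m−1})/(q−q⁻¹)²`. -/
theorem stmt_14 (Q P : ℕ) (hQodd : Odd Q) (hQpos : 0 < Q)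
    (hP1 : 1 ≤ P) (hPQ : P ≤ Q - 1) (hcop : Nat.Coprime P Q)
    (q : ℂ) (hq : q = Complex.exp (↑Real.pi * Complex.I * (P : ℂ) / (Q : ℂ)))
    (n : ℤ) :
    let c : ℕ → ℂ := fun m =>
      (q ^ (n - 1) + q ^ (-n + 1)) /
        ((q ^ (2 * (m : ℤ) + n - 1) + q ^ (-(2 * (m : ℤ)) - n + 1)) *
          (q ^ (2 * (m : ℤ) + n + 1) + q ^ (-(2 * (m : ℤ)) - n - 1)))
    let dd : ℕ → ℂ := fun m =>
      (q ^ (n - 1) + q ^ (-n + 1)) * qnum q (2 * (m : ℤ) + n) /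
        ((q ^ (2 * (m : ℤ) + n - 1) + q ^ (-(2 * (m : ℤ)) - n + 1)) *
          (q ^ (2 * (m : ℤ) + n + 1) + q ^ (-(2 * (m : ℤ)) - n - 1)))
    ∀ m : ℕ, 1 ≤ m →
      dd m = -((q ^ (2 * (m : ℤ) + n - 1) + q ^ (-(2 * (m : ℤ)) - n + 1)) * c m
          - (q ^ (2 * (m : ℤ) + n - 3) + q ^ (-(2 * (m : ℤ)) - n + 3)) * c (m - 1))
        / (q - q⁻¹) ^ 2 := by
  have key := stmt14_keyQ Q P hQpos hcop q hq
  have hq0 : q ≠ 0 := hq ▸ Complex.exp_ne_zero _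
  have hQ1 : Q ≠ 1 := by rintro rfl; omega
  -- q - q⁻¹ ≠ 0
  have hqq : q - q⁻¹ ≠ 0 := by
    intro h
    have hsq : q * q = 1 := by
      have hinv : q = q⁻¹ := sub_eq_zero.mp h
      calc q * q = q * q⁻¹ := by rw [← hinv]
        _ = 1 := mul_inv_cancel₀ hq0
    have h2 : q ^ (2 * (1:ℤ)) = 1 := by
      rw [show 2 * (1:ℤ) = 1 + 1 by ring, zpow_add₀ hq0, zpow_one]; exact hsq
    have hd : (Q:ℤ) ∣ 1 := (key 1).mp h2
    have h1 : (Q:ℤ) = 1 := Int.eq_one_of_dvd_one (by positivity) hd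
    exact hQ1 (by exact_mod_cast h1)
  -- all `q^a + q^(-a)` are nonzero
  have hAll : ∀ a : ℤ, q ^ a + q ^ (-a) ≠ 0 := by
    intro a h
    have hne : q ^ a ≠ 0 := zpow_ne_zero a hq0
    have hm1 : q ^ (2 * a) = -1 := by
      have hmul : q ^ a * (q ^ a + q ^ (-a)) = 0 := by rw [h, mul_zero]
      have e : q ^ a * q ^ (-a) = 1 := by
        rw [← zpow_add₀ hq0, add_neg_cancel, zpow_zero]
      have h2 : q ^ a * q ^ a + 1 = 0 := by linear_combination hmul - e
      rw [two_mul, zpow_add₀ hq0]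
      linear_combination h2
    have h4 : q ^ (2 * (2 * a)) = 1 := by
      rw [show 2 * (2*a) = 2*a + 2*a by ring, zpow_add₀ hq0, hm1]
      ring
    have hdvd : (Q:ℤ) ∣ 2 * a := (key (2*a)).mp h4
    have hodd : IsCoprime ((Q:ℤ)) (2:ℤ) := by
      rw [Int.isCoprime_iff_gcd_eq_one, show ((2:ℤ)) = ((2:ℕ):ℤ) from rfl,
        Int.gcd_natCast_natCast]
      exact Nat.coprime_two_right.mpr hQodd
    have hdvd' : (Q:ℤ) ∣ a := hodd.dvd_of_dvd_mul_left hdvd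
    have h1 : q ^ (2 * a) = 1 := (key a).mpr hdvd'
    rw [h1] at hm1
    norm_num at hm1
  intro c dd m hm
  obtain ⟨k, rfl⟩ := Nat.exists_eq_add_of_le hm
  simp only [c, dd, qnum, Nat.add_sub_cancel_left]
  set t : ℂ := q ^ (2 * (k:ℤ) + n) with ht
  have ht0 : t ≠ 0 := zpow_ne_zero _ hq0
  set K : ℂ := q ^ (n - 1) + q ^ (-n + 1) with hK
  -- rewrite all the zpow expressions
  have r1 : q ^ (2 * ((1 + k : ℕ) : ℤ) + n - 1) = t * q := by
    rw [show 2 * ((1 + k : ℕ) : ℤ) + n - 1 = (2 * (k:ℤ) + n) + 1 by push_cast; ring,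
      zpow_add₀ hq0, zpow_one]
  have r1' : q ^ (-(2 * ((1 + k : ℕ) : ℤ)) - n + 1) = (t * q)⁻¹ := by
    rw [show -(2 * ((1 + k : ℕ) : ℤ)) - n + 1 = -((2 * (k:ℤ) + n) + 1) by push_cast; ring,
      zpow_neg, zpow_add₀ hq0, zpow_one]
  have r3 : q ^ (2 * ((1 + k : ℕ) : ℤ) + n + 1) = t * q ^ 3 := by
    rw [show 2 * ((1 + k : ℕ) : ℤ) + n + 1 = (2 * (k:ℤ) + n) + ((3:ℕ):ℤ) by push_cast; ring,
      zpow_add₀ hq0, zpow_natCast]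
  have r3' : q ^ (-(2 * ((1 + k : ℕ) : ℤ)) - n - 1) = (t * q ^ 3)⁻¹ := by
    rw [show -(2 * ((1 + k : ℕ) : ℤ)) - n - 1 = -((2 * (k:ℤ) + n) + ((3:ℕ):ℤ)) by push_cast; ring,
      zpow_neg, zpow_add₀ hq0, zpow_natCast]
  have r2 : q ^ (2 * ((1 + k : ℕ) : ℤ) + n) = t * q ^ 2 := by
    rw [show 2 * ((1 + k : ℕ) : ℤ) + n = (2 * (k:ℤ) + n) + ((2:ℕ):ℤ) by push_cast; ring,
      zpow_add₀ hq0, zpow_natCast]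
  have r2' : q ^ (-(2 * ((1 + k : ℕ) : ℤ) + n)) = (t * q ^ 2)⁻¹ := by
    rw [zpow_neg, r2]
  have rm : q ^ (2 * ((k : ℕ) : ℤ) + n - 1) = t * q⁻¹ := by
    rw [show 2 * ((k : ℕ) : ℤ) + n - 1 = (2 * (k:ℤ) + n) + (-1) by push_cast; ring,
      zpow_add₀ hq0, zpow_neg_one]
  have rm' : q ^ (-(2 * ((k : ℕ) : ℤ)) - n + 1) = (t * q⁻¹)⁻¹ := by
    rw [show -(2 * ((k : ℕ) : ℤ)) - n + 1 = -((2 * (k:ℤ) + n) + (-1)) by push_cast; ring,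
      zpow_neg, zpow_add₀ hq0, zpow_neg_one]
  have rk : q ^ (2 * ((k : ℕ) : ℤ) + n + 1) = t * q := by
    rw [show 2 * ((k : ℕ) : ℤ) + n + 1 = (2 * (k:ℤ) + n) + 1 by push_cast; ring,
      zpow_add₀ hq0, zpow_one]
  have rk' : q ^ (-(2 * ((k : ℕ) : ℤ)) - n - 1) = (t * q)⁻¹ := by
    rw [show -(2 * ((k : ℕ) : ℤ)) - n - 1 = -((2 * (k:ℤ) + n) + 1) by push_cast; ring,
      zpow_neg, zpow_add₀ hq0, zpow_one]
  have s3 : q ^ (2 * ((1 + k : ℕ) : ℤ) + n - 3) = t * q⁻¹ := by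
    rw [show 2 * ((1 + k : ℕ) : ℤ) + n - 3 = (2 * (k:ℤ) + n) + (-1) by push_cast; ring,
      zpow_add₀ hq0, zpow_neg_one]
  have s3' : q ^ (-(2 * ((1 + k : ℕ) : ℤ)) - n + 3) = (t * q⁻¹)⁻¹ := by
    rw [show -(2 * ((1 + k : ℕ) : ℤ)) - n + 3 = -((2 * (k:ℤ) + n) + (-1)) by push_cast; ring,
      zpow_neg, zpow_add₀ hq0, zpow_neg_one]
  have hA : t * q + (t * q)⁻¹ ≠ 0 := by
    have h := hAll (2 * (k:ℤ) + n + 1)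
    rwa [show 2 * (k:ℤ) + n + 1 = (2 * (k:ℤ) + n) + 1 by ring, zpow_neg,
      zpow_add₀ hq0, zpow_one] at h
  have hB : t * q ^ 3 + (t * q ^ 3)⁻¹ ≠ 0 := by
    have h := hAll ((2 * (k:ℤ) + n) + ((3:ℕ):ℤ))
    rwa [zpow_neg, zpow_add₀ hq0, zpow_natCast] at h
  have hC : t * q⁻¹ + (t * q⁻¹)⁻¹ ≠ 0 := by
    have h := hAll ((2 * (k:ℤ) + n) + (-1))
    rwa [zpow_neg, zpow_add₀ hq0, zpow_neg_one] at h
  rw [r1, r1', r3, r3', r2, r2', rm, rm', rk, rk', s3, s3']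
  exact stmt14_aux_alg q t K hq0 ht0 hqq hA hB hC
end

section
/- Let Q be an odd positive integer, P ∈ {1,...,Q−1} with gcd(P,Q) = 1, q = exp(iπP/Q), fix n ∈ {1,...,Q} and set d = Q+1−n. With the d×d tridiagonal matrices ρ(X), ρ(Y), ρ(Z) of the representation ρ (entries: ρ(Z)_{m−1,m} = −(q²−q⁻²)q^{2m+n−1}a_m, ρ(Z)_{m+1,m} = (q²−q⁻²)q^{−2m−n−1}a_{m+1}, ρ(Z)_{mm} = (q+q⁻¹)c_m; ρ(X)_{m−1,m} = (q+q⁻¹)a_m, ρ(X)_{m+1,m} = (q+q⁻¹)a_{m+1}, ρ(X)_{mm} = d_m; ρ(Y)_{m−1,m} = (q+q⁻¹)q^{2(2m+n−1)}a_m, ρ(Y)_{m+1,m} = (q+q⁻¹)q^{−2(2m+n+1)}a_{m+1}, ρ(Y)_{mm} = −d_m, where a_m² = [m]_{q²}[m+n−1]_{q²}/((q^{2m+n−1}+q^{−2m−n+1})²(q^{2m+n−2}+q^{−2m−n+2})(q^{2m+n}+q^{−2m−n})), c_m = (q^{n−1}+q^{−n+1})/((q^{2m+n−1}+q^{−2m−n+1})(q^{2m+n+1}+q^{−2m−n−1})),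 d_m = [2m+n]_q c_m), let D be the d×d diagonal matrix with D_{mm} = [2m+n]_q for m = 0,...,d−1. Then q ρ(X) − q⁻¹ ρ(Y) = D ρ(Z). -/
/-- With the tridiagonal matrices `ρ(X), ρ(Y), ρ(Z)` of the representation `ρ`
and the diagonal matrix `D = diag([n]_q, [n+2]_q, ..., [2(d−1)+n]_q)`, one has
`q ρ(X) − q⁻¹ ρ(Y) = D ρ(Z)` (the matrix form of `ρ((qX − q⁻¹Y)Z⁻¹) = D`). -/
theorem stmt_17 (Q P : ℕ) (hQodd : Odd Q) (hQpos : 0 < Q)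
    (hP1 : 1 ≤ P) (hPQ : P ≤ Q - 1) (hcop : Nat.Coprime P Q)
    (q : ℂ) (hq : q = Complex.exp (↑Real.pi * Complex.I * (P : ℂ) / (Q : ℂ)))
    (n : ℕ) (hn1 : 1 ≤ n) (hnQ : n ≤ Q) (d : ℕ) (hd : d = Q + 1 - n)
    (a : ℕ → ℂ)
    (ha : ∀ m : ℕ, 1 ≤ m → m ≤ d - 1 →
      a m ^ 2 = qnum (q ^ 2) (m : ℤ) * qnum (q ^ 2) ((m : ℤ) + (n : ℤ) - 1) /
        ((q ^ (2 * (m : ℤ) + n - 1) + q ^ (-(2 * (m : ℤ)) - n + 1)) ^ 2 *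
          ((q ^ (2 * (m : ℤ) + n - 2) + q ^ (-(2 * (m : ℤ)) - n + 2)) *
            (q ^ (2 * (m : ℤ) + n) + q ^ (-(2 * (m : ℤ)) - n))))) :
    let c : ℕ → ℂ := fun m =>
      (q ^ ((n : ℤ) - 1) + q ^ (-(n : ℤ) + 1)) /
        ((q ^ (2 * (m : ℤ) + n - 1) + q ^ (-(2 * (m : ℤ)) - n + 1)) *
          (q ^ (2 * (m : ℤ) + n + 1) + q ^ (-(2 * (m : ℤ)) - n - 1)))
    let dd : ℕ → ℂ := fun m => qnum q (2 * (m : ℤ) + n) * c m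
    let ρZ : Matrix (Fin d) (Fin d) ℂ := Matrix.of fun i j =>
      if (j : ℕ) = (i : ℕ) + 1 then
        -(q ^ (2 : ℤ) - q ^ (-2 : ℤ)) * q ^ (2 * (j : ℤ) + n - 1) * a (j : ℕ)
      else if (i : ℕ) = (j : ℕ) + 1 then
        (q ^ (2 : ℤ) - q ^ (-2 : ℤ)) * q ^ (-(2 * (j : ℤ)) - n - 1) * a ((j : ℕ) + 1)
      else if i = j then (q + q⁻¹) * c (i : ℕ) else 0
    let ρX : Matrix (Fin d) (Fin d) ℂ := Matrix.of fun i j =>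
      if (j : ℕ) = (i : ℕ) + 1 then (q + q⁻¹) * a (j : ℕ)
      else if (i : ℕ) = (j : ℕ) + 1 then (q + q⁻¹) * a ((j : ℕ) + 1)
      else if i = j then dd (i : ℕ) else 0
    let ρY : Matrix (Fin d) (Fin d) ℂ := Matrix.of fun i j =>
      if (j : ℕ) = (i : ℕ) + 1 then (q + q⁻¹) * q ^ (2 * (2 * (j : ℤ) + n - 1)) * a (j : ℕ)
      else if (i : ℕ) = (j : ℕ) + 1 then
        (q + q⁻¹) * q ^ (-(2 * (2 * (j : ℤ) + n + 1))) * a ((j : ℕ) + 1)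
      else if i = j then -dd (i : ℕ) else 0
    let D : Matrix (Fin d) (Fin d) ℂ :=
      Matrix.diagonal fun m : Fin d => qnum q (2 * (m : ℤ) + n)
    q • ρX - q⁻¹ • ρY = D * ρZ := by
  intro c dd ρZ ρX ρY D
  -- basic nonvanishing facts
  have hq0 : q ≠ 0 := by rw [hq]; exact Complex.exp_ne_zero _
  have hq2 : q ^ 2 - 1 ≠ 0 := by
    rw [sub_ne_zero]
    intro h
    have hQ0 : (Q : ℂ) ≠ 0 := Nat.cast_ne_zero.mpr hQpos.ne'
    have h2 : Complex.exp (2 * (↑Real.pi * Complex.I * (P : ℂ) / (Q : ℂ))) = 1 := by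
      rw [two_mul, Complex.exp_add, ← hq, ← sq]; exact h
    rw [Complex.exp_eq_one_iff] at h2
    obtain ⟨k, hk⟩ := h2
    have hpi : (Real.pi : ℂ) ≠ 0 := by exact_mod_cast Real.pi_ne_zero
    field_simp at hk
    have h3 : (2*(Real.pi:ℂ)*Complex.I) * (P:ℂ) = (2*(Real.pi:ℂ)*Complex.I) * ((k:ℂ)*Q) := by
      linear_combination (2*(Real.pi:ℂ)*Complex.I) * hk
    have hP : (P:ℂ) = (k:ℂ)*Q :=
      mul_left_cancel₀ (by simp [hpi, Complex.I_ne_zero]) h3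
    have hPZ : (P:ℤ) = k * Q := by exact_mod_cast hP
    have hPQ' : P < Q := by omega
    rcases lt_or_ge k 1 with hk1 | hk1
    · have hk0 : k ≤ 0 := by omega
      have : k * (Q:ℤ) ≤ 0 := mul_nonpos_of_nonpos_of_nonneg hk0 (by positivity)
      omega
    · have : (Q:ℤ) ≤ k * Q := le_mul_of_one_le_left (by positivity) hk1
      omega
  have hqq : q - q⁻¹ ≠ 0 := by
    intro h; apply hq2
    have hh : q * (q - q⁻¹) = q ^ 2 - 1 := by field_simp
    rw [← hh, h, mul_zero]
  ext i j
  rw [Matrix.sub_apply, Matrix.smul_apply, Matrix.smul_apply, Matrix.diagonal_mul]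
  simp only [ρX, ρY, ρZ, Matrix.of_apply, smul_eq_mul]
  by_cases h1 : (j : ℕ) = (i : ℕ) + 1
  · -- superdiagonal
    rw [if_pos h1, if_pos h1, if_pos h1]
    have hij : ((i : Fin d) : ℤ) = ((j : Fin d) : ℤ) - 1 := by
      have : ((j : Fin d) : ℤ) = ((i : Fin d) : ℤ) + 1 := by exact_mod_cast h1
      omega
    rw [hij]
    set J : ℤ := ((j : Fin d) : ℤ) with hJ
    simp only [qnum]
    rw [show (2 * (2 * J + (n:ℤ) - 1)) = (2 * J + n) + ((2 * J + n) + (-2)) from by ring,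
        show (2 * (J - 1) + (n:ℤ)) = (2 * J + n) + (-2) from by ring,
        show (-((2 * J + (n:ℤ)) + (-2))) = -(2 * J + (n:ℤ)) + 2 from by ring,
        show (2 * J + (n:ℤ) - 1) = (2 * J + n) + (-1) from by ring]
    have e1 : ∀ t : ℤ, q ^ ((2 * J + (n:ℤ)) + t) = q ^ (2 * J + (n:ℤ)) * q ^ t :=
      fun t => zpow_add₀ hq0 _ t
    have e2 : ∀ t : ℤ, q ^ (-(2 * J + (n:ℤ)) + t) = (q ^ (2 * J + (n:ℤ)))⁻¹ * q ^ t :=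
      fun t => by rw [zpow_add₀ hq0, zpow_neg]
    rw [e1, e1, e1, e2]
    have hs : q ^ (2 * J + (n:ℤ)) ≠ 0 := zpow_ne_zero _ hq0
    generalize q ^ (2 * J + (n:ℤ)) = s at hs ⊢
    rw [div_mul_eq_mul_div, eq_div_iff hqq]
    clear e1 e2 hqq hq2
    simp only [zpow_neg, zpow_one, zpow_ofNat]
    field_simp [hq0]
    ring
  · rw [if_neg h1, if_neg h1, if_neg h1]
    by_cases h2 : (i : ℕ) = (j : ℕ) + 1
    · -- subdiagonal
      rw [if_pos h2, if_pos h2, if_pos h2]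
      have hij : ((i : Fin d) : ℤ) = ((j : Fin d) : ℤ) + 1 := by exact_mod_cast h2
      rw [hij]
      set J : ℤ := ((j : Fin d) : ℤ) with hJ
      simp only [qnum]
      rw [show (-(2 * (2 * J + (n:ℤ) + 1))) = -(2 * J + (n:ℤ)) + (-(2 * J + (n:ℤ)) + (-2)) from by ring,
          show (2 * (J + 1) + (n:ℤ)) = (2 * J + n) + 2 from by ring,
          show (-((2 * J + (n:ℤ)) + 2)) = -(2 * J + (n:ℤ)) + (-2) from by ring,
          show (-(2 * J) - (n:ℤ) - 1) = -(2 * J + (n:ℤ)) + (-1) from by ring]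
      have e1 : ∀ t : ℤ, q ^ ((2 * J + (n:ℤ)) + t) = q ^ (2 * J + (n:ℤ)) * q ^ t :=
        fun t => zpow_add₀ hq0 _ t
      have e2 : ∀ t : ℤ, q ^ (-(2 * J + (n:ℤ)) + t) = (q ^ (2 * J + (n:ℤ)))⁻¹ * q ^ t :=
        fun t => by rw [zpow_add₀ hq0, zpow_neg]
      rw [e2, e2, e1, e2]
      have hs : q ^ (2 * J + (n:ℤ)) ≠ 0 := zpow_ne_zero _ hq0
      generalize q ^ (2 * J + (n:ℤ)) = s at hs ⊢
      rw [div_mul_eq_mul_div, eq_div_iff hqq]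
      clear e1 e2 hqq hq2
      simp only [zpow_neg, zpow_one, zpow_ofNat]
      field_simp [hq0, hs]
      have h4 : q ^ 4 * q⁻¹ ^ 4 = 1 := by rw [← mul_pow, mul_inv_cancel₀ hq0, one_pow]
      have h5 : s ^ 2 * s⁻¹ ^ 2 = 1 := by rw [← mul_pow, mul_inv_cancel₀ hs, one_pow]
      ring
    · rw [if_neg h2, if_neg h2, if_neg h2]
      by_cases h3 : i = j
      · -- diagonal
        rw [if_pos h3, if_pos h3, if_pos h3]
        simp only [dd]
        ring
      · rw [if_neg h3, if_neg h3, if_neg h3]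
        simp
end

section
/- Let Q be an odd positive integer, P ∈ {1,...,Q−1} with gcd(P,Q) = 1, q = exp(iπP/Q), fix n ∈ {1,...,Q} and set d = Q+1−n. For m = 1,...,d−1, define r_m = [m]_{q²}[m+n−1]_{q²} / ((q^{2m+n−2} + q^{−2m−n+2})(q^{2m+n} + q^{−2m−n})). Then each r_m is a nonzero real number. -/
/-- For `q = exp(iπP/Q)`, `n ∈ {1,...,Q}`, `d = Q+1−n`, and `m ∈ {1,...,d−1}`,
the quantity `r_m = [m]_{q²}[m+n−1]_{q²}/((q^{2m+n−2}+q^{−2m−n+2})(q^{2m+n}+q^{−2m−n}))`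
is a nonzero real number. -/
theorem stmt_18 (Q P : ℕ) (hQodd : Odd Q) (hQpos : 0 < Q)
    (hP1 : 1 ≤ P) (hPQ : P ≤ Q - 1) (hcop : Nat.Coprime P Q)
    (q : ℂ) (hq : q = Complex.exp (↑Real.pi * Complex.I * (P : ℂ) / (Q : ℂ)))
    (n : ℕ) (hn1 : 1 ≤ n) (hnQ : n ≤ Q) (d : ℕ) (hd : d = Q + 1 - n) :
    let r : ℕ → ℂ := fun m =>
      qnum (q ^ 2) (m : ℤ) * qnum (q ^ 2) ((m : ℤ) + (n : ℤ) - 1) /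
        ((q ^ (2 * (m : ℤ) + n - 2) + q ^ (-(2 * (m : ℤ)) - n + 2)) *
          (q ^ (2 * (m : ℤ) + n) + q ^ (-(2 * (m : ℤ)) - n)))
    ∀ m : ℕ, 1 ≤ m → m ≤ d - 1 → r m ≠ 0 ∧ (r m).im = 0 := by
  intro r m hm1 hm2
  have hQ2 : 2 ≤ Q := by omega
  have hq0 : q ≠ 0 := by rw [hq]; exact Complex.exp_ne_zero _
  have hQ0 : (Q : ℂ) ≠ 0 := by exact_mod_cast (by omega : Q ≠ 0)
  have hπ : (Real.pi : ℂ) ≠ 0 := by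
    exact_mod_cast Complex.ofReal_ne_zero.mpr Real.pi_ne_zero
  have hπI : (Real.pi : ℂ) * Complex.I ≠ 0 := mul_ne_zero hπ Complex.I_ne_zero
  -- q^j as exponential
  have hpow : ∀ j : ℤ, q ^ j = Complex.exp ((j : ℂ) * (↑Real.pi * Complex.I * (P : ℂ) / (Q : ℂ))) := by
    intro j; rw [hq, Complex.exp_int_mul]
  -- if q^j = 1 then Q ∣ j
  have hQdvd : ∀ j : ℤ, q ^ j = 1 → (Q : ℤ) ∣ j := by
    intro j h
    rw [hpow j, Complex.exp_eq_one_iff] at h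
    obtain ⟨k, hk⟩ := h
    have h2 : ((j * P : ℤ) : ℂ) * (↑Real.pi * Complex.I) = ((2 * k * Q : ℤ) : ℂ) * (↑Real.pi * Complex.I) := by
      push_cast
      field_simp at hk
      linear_combination (↑Real.pi * Complex.I) * hk
    have h3 : (j * P : ℤ) = 2 * k * Q := by
      have := mul_right_cancel₀ hπI h2
      exact_mod_cast this
    have hdvd : (Q : ℤ) ∣ j * P := ⟨2 * k, by linarith⟩
    have hco : IsCoprime (Q : ℤ) (P : ℤ) := Nat.isCoprime_iff_coprime.mpr hcop.symm
    exact hco.dvd_of_dvd_mul_right hdvd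
  -- q^(2Q) = 1
  have h2Q : q ^ ((2 * Q : ℤ)) = 1 := by
    rw [hpow]
    rw [show ((2 * (Q:ℕ) : ℤ) : ℂ) * (↑Real.pi * Complex.I * (P : ℂ) / (Q : ℂ))
        = (P : ℂ) * (2 * ↑Real.pi * Complex.I) by push_cast; field_simp]
    have := Complex.exp_int_mul_two_pi_mul_I (P:ℤ)
    push_cast at this
    exact this
  -- Q coprime to 4
  have hco4 : IsCoprime (Q : ℤ) (4 : ℤ) := by
    have h2 : Nat.Coprime Q 2 :=
      ((Nat.Prime.coprime_iff_not_dvd Nat.prime_two).mpr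
        (by have := Nat.odd_iff.mp hQodd; omega)).symm
    have h4 : Nat.Coprime Q 4 := by
      have := Nat.Coprime.pow_right 2 h2
      simpa using this
    have := Nat.isCoprime_iff_coprime.mpr h4
    exact_mod_cast this
  -- numerator factors nonzero
  have hnum : ∀ x : ℤ, ¬ (Q : ℤ) ∣ x → q ^ (2 * x) - q ^ (-(2 * x)) ≠ 0 := by
    intro x hx h
    apply hx
    have h1 : q ^ (2 * x) = q ^ (-(2 * x)) := sub_eq_zero.mp h
    have h2 : q ^ (4 * x) = 1 := by
      have := congrArg (· * q ^ (2 * x)) h1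
      rw [← zpow_add₀ hq0, ← zpow_add₀ hq0] at this
      rw [show -(2*x) + 2*x = 0 by ring, zpow_zero] at this
      rw [show (2*x) + 2*x = 4*x by ring] at this
      exact this
    have h3 : (Q : ℤ) ∣ 4 * x := hQdvd _ h2
    exact hco4.dvd_of_dvd_mul_left h3
  -- denominator factors nonzero
  have hden : ∀ a : ℤ, q ^ a + q ^ (-a) ≠ 0 := by
    intro a h
    have h1 : q ^ (2 * a) = -1 := by
      have h1 : q ^ a = -q ^ (-a) := by linear_combination h
      have := congrArg (· * q ^ a) h1
      rw [← zpow_add₀ hq0, neg_mul, ← zpow_add₀ hq0] at this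
      rw [show a + a = 2*a by ring, show -a + a = 0 by ring, zpow_zero] at this
      simpa using this
    have h2 : q ^ (4 * a) = 1 := by
      rw [show 4*a = 2*a + 2*a by ring, zpow_add₀ hq0, h1]; ring
    have h3 : (Q : ℤ) ∣ a := by
      have h3 : (Q : ℤ) ∣ 4 * a := hQdvd _ h2
      exact hco4.dvd_of_dvd_mul_left h3
    obtain ⟨t, ht⟩ := h3
    have : q ^ (2 * a) = 1 := by
      rw [ht, show 2 * ((Q:ℤ) * t) = (2 * Q) * t by ring, zpow_mul, h2Q, one_zpow]
    rw [this] at h1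
    norm_num at h1
  -- rewrite qnum (q^2)
  have hqnum : ∀ x : ℤ, qnum (q ^ 2) x = (q ^ (2 * x) - q ^ (-(2 * x))) / (q ^ (2:ℤ) - q ^ (-2:ℤ)) := by
    intro x
    unfold qnum
    rw [show (q ^ 2 : ℂ) = q ^ (2:ℤ) by norm_cast]
    rw [← zpow_mul, ← zpow_mul]
    rw [← zpow_neg]
    ring_nf
  -- conj q = q⁻¹
  have hconj : (starRingEnd ℂ) q = q⁻¹ := by
    rw [hq, ← Complex.exp_conj, ← Complex.exp_neg]
    congr 1
    simp [map_div₀, Complex.conj_I]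
    ring
  have hc : ∀ a : ℤ, (starRingEnd ℂ) (q ^ a) = q ^ (-a) := by
    intro a
    rw [map_zpow₀, hconj, ← zpow_neg_one, ← zpow_mul]
    congr 1; ring
  -- bounds
  have hmz : ¬ (Q : ℤ) ∣ (m : ℤ) := by
    intro h
    have hub : (m : ℤ) ≤ (Q : ℤ) - 1 := by
      have : m ≤ Q - n := by omega
      omega
    have := Int.le_of_dvd (by exact_mod_cast hm1) h
    omega
  have hmz2 : ¬ (Q : ℤ) ∣ ((m : ℤ) + n - 1) := by
    intro h
    have hub : (m : ℤ) + n - 1 ≤ (Q : ℤ) - 1 := by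
      have : m ≤ Q - n := by omega
      omega
    have hlb : 1 ≤ (m : ℤ) + n - 1 := by
      have : (1:ℤ) ≤ m := by exact_mod_cast hm1
      have : (1:ℤ) ≤ n := by exact_mod_cast hn1
      omega
    have := Int.le_of_dvd (by omega) h
    omega
  have h1z : ¬ (Q : ℤ) ∣ (1 : ℤ) := by
    intro h
    have := Int.le_of_dvd one_pos h
    omega
  have hdenq : q ^ (2:ℤ) - q ^ (-2:ℤ) ≠ 0 := by
    have := hnum 1 h1z
    simpa using this
  constructor
  · -- nonzero
    show qnum (q^2) (m:ℤ) * qnum (q^2) ((m:ℤ) + n - 1) /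
      ((q ^ (2 * (m : ℤ) + n - 2) + q ^ (-(2 * (m : ℤ)) - n + 2)) *
          (q ^ (2 * (m : ℤ) + n) + q ^ (-(2 * (m : ℤ)) - n))) ≠ 0
    apply div_ne_zero
    · apply mul_ne_zero
      · rw [hqnum]; exact div_ne_zero (hnum _ hmz) hdenq
      · rw [hqnum]; exact div_ne_zero (hnum _ hmz2) hdenq
    · apply mul_ne_zero
      · rw [show (-(2 * (m : ℤ)) - n + 2) = -(2 * (m : ℤ) + n - 2) by ring]
        exact hden _
      · rw [show (-(2 * (m : ℤ)) - n) = -(2 * (m : ℤ) + n) by ring]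
        exact hden _
  · -- real
    rw [← Complex.conj_eq_iff_im]
    show (starRingEnd ℂ) (qnum (q^2) (m:ℤ) * qnum (q^2) ((m:ℤ) + n - 1) /
      ((q ^ (2 * (m : ℤ) + n - 2) + q ^ (-(2 * (m : ℤ)) - n + 2)) *
          (q ^ (2 * (m : ℤ) + n) + q ^ (-(2 * (m : ℤ)) - n)))) =
      (qnum (q^2) (m:ℤ) * qnum (q^2) ((m:ℤ) + n - 1) /
      ((q ^ (2 * (m : ℤ) + n - 2) + q ^ (-(2 * (m : ℤ)) - n + 2)) *
          (q ^ (2 * (m : ℤ) + n) + q ^ (-(2 * (m : ℤ)) - n))))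
    rw [show (-(2 * (m : ℤ)) - n + 2) = -(2 * (m : ℤ) + n - 2) by ring]
    rw [show (-(2 * (m : ℤ)) - n) = -(2 * (m : ℤ) + n) by ring]
    have hcq : ∀ x : ℤ, (starRingEnd ℂ) (qnum (q^2) x) = qnum (q^2) x := by
      intro x
      rw [hqnum, map_div₀, map_sub, map_sub, hc, hc, hc, hc]
      simp only [neg_neg]
      rw [← neg_sub (q ^ (2*x)), ← neg_sub (q ^ (2:ℤ)), neg_div_neg_eq]
    have hca : ∀ a : ℤ, (starRingEnd ℂ) (q ^ a + q ^ (-a)) = q ^ a + q ^ (-a) := by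
      intro a
      rw [map_add, hc, hc, neg_neg, add_comm]
    rw [map_div₀, map_mul, map_mul, hcq, hcq, hca, hca]
end

section
/- Let Q be an odd positive integer, P ∈ {1,...,Q−1} with gcd(P,Q) = 1, q = exp(iπP/Q), fix n ∈ {1,...,Q} and set d = Q+1−n. For m = 1,...,d−1 set r_m = [m]_{q²}[m+n−1]_{q²}/((q^{2m+n−2}+q^{−2m−n+2})(q^{2m+n}+q^{−2m−n})) (a nonzero real number), and define a_m = b_m = (q^{2m+n−1}+q^{−2m−n+1})⁻¹ · √r_m, where √r_m denotes the nonnegative real square root if r_m > 0 and i·√|r_m| if r_m < 0. Set c_m = (q^{n−1}+q^{−n+1})/((q^{2m+n−1}+q^{−2m−n+1})(q^{2m+n+1}+q^{−2m−n−1})), d_m = [2m+n]_q c_m, and let ρ(X), ρ(Y), ρ(Z) be the d×d tridiagonal matrices with entries ρ(Z)_{m−1,m} = −(q²−q⁻²)q^{2m+n−1}a_m, ρ(Z)_{m+1,m} = (q²−q⁻²)q^{−2m−n−1}b_{m+1}, ρ(Z)_{mm} = (q+q⁻¹)c_m; ρ(X)_{m−1,m} = (q+q⁻¹)a_m, ρ(X)_{m+1,m}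 = (q+q⁻¹)b_{m+1}, ρ(X)_{mm} = d_m; ρ(Y)_{m−1,m} = (q+q⁻¹)q^{2(2m+n−1)}a_m, ρ(Y)_{m+1,m} = (q+q⁻¹)q^{−2(2m+n+1)}b_{m+1}, ρ(Y)_{mm} = −d_m. Let T = diag(τ_0,...,τ_{d−1}) with τ_0 = 1 and τ_m = τ_{m−1}·sgn(r_m). Then T ρ(X) T = ρ(X)*, T ρ(Y) T = ρ(Y)*, and T ρ(Z) T = ρ(Z)*, where * denotes the conjugate transpose; moreover T² = 1. -/
open Matrix

/-- The square root of a (real) complex number `z`: the nonnegative real square root if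
`z > 0`, and `i·√|z|` if `z < 0`. -/
noncomputable def sqrtSgn (z : ℂ) : ℂ :=
  if 0 < z.re then ((Real.sqrt z.re : ℝ) : ℂ) else Complex.I * ((Real.sqrt |z.re| : ℝ) : ℂ)

/-- `r_m = [m]_{q²}[m+n−1]_{q²}/((q^{2m+n−2}+q^{−2m−n+2})(q^{2m+n}+q^{−2m−n}))`. -/
noncomputable def rcoef (q : ℂ) (n : ℤ) (m : ℕ) : ℂ :=
  qnum (q ^ 2) (m : ℤ) * qnum (q ^ 2) ((m : ℤ) + n - 1) /
    ((q ^ (2 * (m : ℤ) + n - 2) + q ^ (-(2 * (m : ℤ)) - n + 2)) *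
      (q ^ (2 * (m : ℤ) + n) + q ^ (-(2 * (m : ℤ)) - n)))

/-- `a_m = b_m = (q^{2m+n−1}+q^{−2m−n+1})⁻¹ √r_m`. -/
noncomputable def acoef (q : ℂ) (n : ℤ) (m : ℕ) : ℂ :=
  (q ^ (2 * (m : ℤ) + n - 1) + q ^ (-(2 * (m : ℤ)) - n + 1))⁻¹ * sqrtSgn (rcoef q n m)

/-- `c_m = (q^{n−1}+q^{−n+1})/((q^{2m+n−1}+q^{−2m−n+1})(q^{2m+n+1}+q^{−2m−n−1}))`. -/
noncomputable def ccoef (q : ℂ) (n : ℤ) (m : ℕ) : ℂ :=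
  (q ^ (n - 1) + q ^ (-n + 1)) /
    ((q ^ (2 * (m : ℤ) + n - 1) + q ^ (-(2 * (m : ℤ)) - n + 1)) *
      (q ^ (2 * (m : ℤ) + n + 1) + q ^ (-(2 * (m : ℤ)) - n - 1)))

/-- `d_m = [2m+n]_q c_m`. -/
noncomputable def dcoef (q : ℂ) (n : ℤ) (m : ℕ) : ℂ :=
  qnum q (2 * (m : ℤ) + n) * ccoef q n m


lemma conj_qnum (u : ℂ) (h : (starRingEnd ℂ) u = u⁻¹) (x : ℤ) :
    (starRingEnd ℂ) (qnum u x) = qnum u x := by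
  unfold qnum
  rw [map_div₀, _root_.map_sub, _root_.map_sub, map_zpow₀, map_zpow₀, map_inv₀, h, inv_inv, _root_.inv_zpow,
    _root_.inv_zpow, ← _root_.zpow_neg, ← _root_.zpow_neg, neg_neg,
    show u ^ (-x) - u ^ x = -(u ^ x - u ^ (-x)) from by ring,
    show u⁻¹ - u = -(u - u⁻¹) from by ring, neg_div_neg_eq]

lemma conj_sqrtSgn (z : ℂ) :
    (starRingEnd ℂ) (sqrtSgn z) = (if 0 < z.re then 1 else -1) * sqrtSgn z := by
  unfold sqrtSgn
  split_ifs with h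
  · simp [Complex.conj_ofReal]
  · rw [_root_.map_mul, Complex.conj_I, Complex.conj_ofReal]; ring

lemma conj_acoef (q : ℂ) (hq : (starRingEnd ℂ) q = q⁻¹) (n : ℤ) (m : ℕ) :
    (starRingEnd ℂ) (acoef q n m)
      = (if 0 < (rcoef q n m).re then 1 else -1) * acoef q n m := by
  have hpow : ∀ k : ℤ, (starRingEnd ℂ) (q ^ k) = q ^ (-k) := fun k => by
    rw [map_zpow₀, hq, _root_.inv_zpow, ← _root_.zpow_neg]
  unfold acoef
  rw [_root_.map_mul, map_inv₀, _root_.map_add, hpow, hpow, conj_sqrtSgn,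
    show -(2 * (m:ℤ) + n - 1) = -(2 * (m:ℤ)) - n + 1 from by ring,
    show -(-(2 * (m:ℤ)) - n + 1) = 2 * (m:ℤ) + n - 1 from by ring,
    add_comm (q ^ (-(2 * (m:ℤ)) - n + 1))]
  ring

lemma conj_ccoef (q : ℂ) (hq : (starRingEnd ℂ) q = q⁻¹) (n : ℤ) (m : ℕ) :
    (starRingEnd ℂ) (ccoef q n m) = ccoef q n m := by
  have hpow : ∀ k : ℤ, (starRingEnd ℂ) (q ^ k) = q ^ (-k) := fun k => by
    rw [map_zpow₀, hq, _root_.inv_zpow, ← _root_.zpow_neg]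
  unfold ccoef
  rw [map_div₀, _root_.map_mul, _root_.map_add, _root_.map_add, _root_.map_add, hpow, hpow, hpow, hpow, hpow, hpow,
    show -(n - 1) = -n + 1 from by ring, show -(-n + 1) = n - 1 from by ring,
    show -(2 * (m:ℤ) + n - 1) = -(2 * (m:ℤ)) - n + 1 from by ring,
    show -(-(2 * (m:ℤ)) - n + 1) = 2 * (m:ℤ) + n - 1 from by ring,
    show -(2 * (m:ℤ) + n + 1) = -(2 * (m:ℤ)) - n - 1 from by ring,
    show -(-(2 * (m:ℤ)) - n - 1) = 2 * (m:ℤ) + n + 1 from by ring]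
  ring

lemma conj_dcoef (q : ℂ) (hq : (starRingEnd ℂ) q = q⁻¹) (n : ℤ) (m : ℕ) :
    (starRingEnd ℂ) (dcoef q n m) = dcoef q n m := by
  unfold dcoef
  rw [_root_.map_mul, conj_qnum q hq, conj_ccoef q hq]

/-- For `q = exp(iπP/Q)`, `n ∈ {1,...,Q}`, `d = Q+1−n`, the tridiagonal matrices
`ρ(X), ρ(Y), ρ(Z)` together with the diagonal sign matrix `T = diag(τ_0,...,τ_{d−1})`
(`τ_0 = 1`, `τ_m = τ_{m−1}·sgn(r_m)`) satisfy `T ρ(X) T = ρ(X)*`, `T ρ(Y) T = ρ(Y)*`,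
`T ρ(Z) T = ρ(Z)*` (conjugate transpose), and `T² = 1`. -/
theorem stmt_19 (Q P : ℕ) (hQodd : Odd Q) (hQpos : 0 < Q)
    (hP1 : 1 ≤ P) (hPQ : P ≤ Q - 1) (hcop : Nat.Coprime P Q)
    (q : ℂ) (hq : q = Complex.exp (↑Real.pi * Complex.I * (P : ℂ) / (Q : ℂ)))
    (n : ℕ) (hn1 : 1 ≤ n) (hnQ : n ≤ Q) (d : ℕ) (hd : d = Q + 1 - n)
    (τ : ℕ → ℂ) (hτ0 : τ 0 = 1)
    (hτ : ∀ m : ℕ, 1 ≤ m → m ≤ d - 1 →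
      τ m = τ (m - 1) * (if 0 < (rcoef q (n : ℤ) m).re then 1 else -1)) :
    let ρZ : Matrix (Fin d) (Fin d) ℂ := Matrix.of fun i j =>
      if (j : ℕ) = (i : ℕ) + 1 then
        -(q ^ (2 : ℤ) - q ^ (-2 : ℤ)) * q ^ (2 * (j : ℤ) + n - 1) * acoef q (n : ℤ) (j : ℕ)
      else if (i : ℕ) = (j : ℕ) + 1 then
        (q ^ (2 : ℤ) - q ^ (-2 : ℤ)) * q ^ (-(2 * (j : ℤ)) - n - 1) * acoef q (n : ℤ) ((j : ℕ) + 1)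
      else if i = j then (q + q⁻¹) * ccoef q (n : ℤ) (i : ℕ) else 0
    let ρX : Matrix (Fin d) (Fin d) ℂ := Matrix.of fun i j =>
      if (j : ℕ) = (i : ℕ) + 1 then (q + q⁻¹) * acoef q (n : ℤ) (j : ℕ)
      else if (i : ℕ) = (j : ℕ) + 1 then (q + q⁻¹) * acoef q (n : ℤ) ((j : ℕ) + 1)
      else if i = j then dcoef q (n : ℤ) (i : ℕ) else 0
    let ρY : Matrix (Fin d) (Fin d) ℂ := Matrix.of fun i j =>
      if (j : ℕ) = (i : ℕ) + 1 then
        (q + q⁻¹) * q ^ (2 * (2 * (j : ℤ) + n - 1)) * acoef q (n : ℤ) (j : ℕ)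
      else if (i : ℕ) = (j : ℕ) + 1 then
        (q + q⁻¹) * q ^ (-(2 * (2 * (j : ℤ) + n + 1))) * acoef q (n : ℤ) ((j : ℕ) + 1)
      else if i = j then -dcoef q (n : ℤ) (i : ℕ) else 0
    let T : Matrix (Fin d) (Fin d) ℂ := Matrix.diagonal fun m : Fin d => τ (m : ℕ)
    T * ρX * T = ρXᴴ ∧ T * ρY * T = ρYᴴ ∧ T * ρZ * T = ρZᴴ ∧ T * T = 1 := by
  intro ρZ ρX ρY T
  have hq0 : q ≠ 0 := by rw [hq]; exact Complex.exp_ne_zero _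
  have hcq : (starRingEnd ℂ) q = q⁻¹ := by
    rw [hq, ← Complex.exp_conj, ← Complex.exp_neg]
    congr 1
    simp only [map_div₀, _root_.map_mul, Complex.conj_ofReal, Complex.conj_I, Complex.conj_natCast]
    ring
  have hpow : ∀ k : ℤ, (starRingEnd ℂ) (q ^ k) = q ^ (-k) := fun k => by
    rw [map_zpow₀, hcq, _root_.inv_zpow, ← _root_.zpow_neg]
  set s : ℕ → ℂ := fun m => if 0 < (rcoef q (n:ℤ) m).re then (1:ℂ) else -1 with hs
  have hsdef : ∀ m : ℕ, (if 0 < (rcoef q (n:ℤ) m).re then (1:ℂ) else -1) = s m := fun m => rfl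
  have hssq : ∀ m, s m * s m = 1 := by
    intro m; by_cases h : 0 < (rcoef q (n:ℤ) m).re <;> simp [hs, h]
  have hca : ∀ m : ℕ, (starRingEnd ℂ) (acoef q (n:ℤ) m) = s m * acoef q (n:ℤ) m := by
    intro m; rw [conj_acoef q hcq, hsdef]
  have hτsq : ∀ m : ℕ, m ≤ d - 1 → τ m * τ m = 1 := by
    intro m
    induction m with
    | zero => intro _; rw [hτ0]; ring
    | succ k ih =>
      intro hk
      have e := hτ (k+1) (by omega) hk
      rw [Nat.add_sub_cancel, hsdef] at e
      rw [e]
      linear_combination (s (k+1) * s (k+1)) * ih (by omega) + hssq (k+1)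
  have hτstep : ∀ m : ℕ, m + 1 ≤ d - 1 → τ m * τ (m+1) = s (m+1) := by
    intro m hm
    have e := hτ (m+1) (by omega) hm
    rw [Nat.add_sub_cancel, hsdef] at e
    rw [e]
    linear_combination s (m+1) * hτsq m (by omega)
  refine ⟨?_, ?_, ?_, ?_⟩
  · -- X
    ext i j
    simp only [ρX, T, Matrix.mul_diagonal, Matrix.diagonal_mul, Matrix.conjTranspose_apply,
      Matrix.of_apply, Complex.star_def]
    by_cases h1 : (j:ℕ) = (i:ℕ) + 1
    · have hij2 : ¬((i:ℕ) = (j:ℕ) + 1) := by omega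
      simp only [if_pos h1, if_neg hij2]
      rw [← h1]
      simp only [_root_.map_mul, _root_.map_add, map_inv₀, hcq, inv_inv, hca]
      have hj' : ((j:ℕ):ℤ) = ((i:ℕ):ℤ) + 1 := by exact_mod_cast h1
      have hts : τ (i:ℕ) * τ (j:ℕ) = s (j:ℕ) := by
        have hjd : (j:ℕ) < d := j.isLt
        have h := hτstep (i:ℕ) (by omega)
        rwa [← h1] at h
      rw [← hts]
      ring
    · by_cases h2 : (i:ℕ) = (j:ℕ) + 1
      · simp only [if_neg h1, if_pos h2]
        rw [h2]
        simp only [_root_.map_mul, _root_.map_add, map_inv₀, hcq, inv_inv, hca]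
        have hts : τ (j:ℕ) * τ ((j:ℕ) + 1) = s ((j:ℕ) + 1) := by
          have hid : (i:ℕ) < d := i.isLt
          exact hτstep (j:ℕ) (by omega)
        rw [← hts]
        ring
      · by_cases h3 : i = j
        · subst h3
          simp only [if_neg h1, eq_self_iff_true, if_true]
          rw [conj_dcoef q hcq]
          have hid : (i:ℕ) < d := i.isLt
          linear_combination (dcoef q (n:ℤ) (i:ℕ)) * hτsq (i:ℕ) (by omega)
        · have h3' : ¬(j = i) := fun h => h3 h.symm
          simp only [if_neg h1, if_neg h2, if_neg h3, if_neg h3']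
          simp
  · -- Y
    ext i j
    simp only [ρY, T, Matrix.mul_diagonal, Matrix.diagonal_mul, Matrix.conjTranspose_apply,
      Matrix.of_apply, Complex.star_def]
    by_cases h1 : (j:ℕ) = (i:ℕ) + 1
    · have hij2 : ¬((i:ℕ) = (j:ℕ) + 1) := by omega
      simp only [if_pos h1, if_neg hij2]
      rw [← h1]
      simp only [_root_.map_mul, _root_.map_add, map_inv₀, hcq, inv_inv, hpow, hca]
      have hj' : ((j:ℕ):ℤ) = ((i:ℕ):ℤ) + 1 := by exact_mod_cast h1
      rw [hj']
      have hts : τ (i:ℕ) * τ (j:ℕ) = s (j:ℕ) := by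
        have hjd : (j:ℕ) < d := j.isLt
        have h := hτstep (i:ℕ) (by omega)
        rwa [← h1] at h
      rw [← hts]
      ring
    · by_cases h2 : (i:ℕ) = (j:ℕ) + 1
      · simp only [if_neg h1, if_pos h2]
        rw [h2]
        simp only [_root_.map_mul, _root_.map_add, map_inv₀, hcq, inv_inv, hpow, hca]
        push_cast
        have hts : τ (j:ℕ) * τ ((j:ℕ) + 1) = s ((j:ℕ) + 1) := by
          have hid : (i:ℕ) < d := i.isLt
          exact hτstep (j:ℕ) (by omega)
        rw [← hts]
        ring
      · by_cases h3 : i = j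
        · subst h3
          simp only [if_neg h1, eq_self_iff_true, if_true]
          rw [_root_.map_neg, conj_dcoef q hcq]
          have hid : (i:ℕ) < d := i.isLt
          linear_combination (-(dcoef q (n:ℤ) (i:ℕ))) * hτsq (i:ℕ) (by omega)
        · have h3' : ¬(j = i) := fun h => h3 h.symm
          simp only [if_neg h1, if_neg h2, if_neg h3, if_neg h3']
          simp
  · -- Z
    ext i j
    simp only [ρZ, T, Matrix.mul_diagonal, Matrix.diagonal_mul, Matrix.conjTranspose_apply,
      Matrix.of_apply, Complex.star_def]
    by_cases h1 : (j:ℕ) = (i:ℕ) + 1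
    · have hij2 : ¬((i:ℕ) = (j:ℕ) + 1) := by omega
      simp only [if_pos h1, if_neg hij2]
      rw [← h1]
      simp only [_root_.map_mul, _root_.map_sub, _root_.map_add, map_inv₀, hcq, inv_inv, hpow, hca]
      have hj' : ((j:ℕ):ℤ) = ((i:ℕ):ℤ) + 1 := by exact_mod_cast h1
      rw [hj']
      have hts : τ (i:ℕ) * τ (j:ℕ) = s (j:ℕ) := by
        have hjd : (j:ℕ) < d := j.isLt
        have h := hτstep (i:ℕ) (by omega)
        rwa [← h1] at h
      rw [← hts]
      ring
    · by_cases h2 : (i:ℕ) = (j:ℕ) + 1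
      · simp only [if_neg h1, if_pos h2]
        rw [h2]
        simp only [_root_.map_neg, _root_.map_mul, _root_.map_sub, _root_.map_add, map_inv₀, hcq, inv_inv, hpow, hca]
        push_cast
        have hts : τ (j:ℕ) * τ ((j:ℕ) + 1) = s ((j:ℕ) + 1) := by
          have hid : (i:ℕ) < d := i.isLt
          exact hτstep (j:ℕ) (by omega)
        rw [← hts]
        ring
      · by_cases h3 : i = j
        · subst h3
          simp only [if_neg h1, eq_self_iff_true, if_true]
          rw [_root_.map_mul, _root_.map_add, map_inv₀, hcq, inv_inv, conj_ccoef q hcq]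
          have hid : (i:ℕ) < d := i.isLt
          linear_combination ((q + q⁻¹) * ccoef q (n:ℤ) (i:ℕ)) * hτsq (i:ℕ) (by omega)
        · have h3' : ¬(j = i) := fun h => h3 h.symm
          simp only [if_neg h1, if_neg h2, if_neg h3, if_neg h3']
          simp
  · -- T² = 1
    simp only [T]
    rw [Matrix.diagonal_mul_diagonal]
    ext i j
    by_cases h : i = j
    · subst h
      simp only [Matrix.diagonal_apply_eq, Matrix.one_apply_eq]
      have hid : (i:ℕ) < d := i.isLt
      exact hτsq (i:ℕ) (by omega)
    · simp [Matrix.diagonal_apply_ne _ h, Matrix.one_apply_ne h]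
end
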